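/- arXiv:0901.4168 — 5 statements merged into one kernel-verified Lean document; each statement's English description precedes it below -/
import Mathlib

section
/- For all m, n ∈ ℤ \ {0}, one has S_m ∩ S_n = S_{gcd(m,n)}. In particular, if gcd(m, n) = 1 then S_m ∩ S_n = ∅. -/
open Multiplicative WithZero

section EE

def ee (k : ℤ) : WithZero (Multiplicative ℤ) :=
  ((Multiplicative.ofAdd k : Multiplicative ℤ) : WithZero (Multiplicative ℤ))

lemma ee_mul (i j : ℤ) : ee i * ee j = ee (i+j) := by
  rw [ee, ee, ee, ← WithZero.coe_mul, ← ofAdd_add]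

lemma ee_le {i j : ℤ} : ee i ≤ ee j ↔ i ≤ j := by
  rw [ee, ee, WithZero.coe_le_coe, Multiplicative.ofAdd_le]

lemma ee_lt {i j : ℤ} : ee i < ee j ↔ i < j := by
  rw [ee, ee, WithZero.coe_lt_coe, Multiplicative.ofAdd_lt]

lemma ee_inj {i j : ℤ} : ee i = ee j ↔ i = j := by
  constructor
  · intro h; exact le_antisymm (ee_le.1 h.le) (ee_le.1 h.ge)
  · intro h; rw [h]

lemma ee_zero : ee 0 = 1 := rfl

lemma ee_ne_zero {k : ℤ} : ee k ≠ 0 := WithZero.coe_ne_zero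

lemma one_lt_ee {k : ℤ} : 1 < ee k ↔ 0 < k := by rw [← ee_zero, ee_lt]

lemma one_le_ee {k : ℤ} : 1 ≤ ee k ↔ 0 ≤ k := by rw [← ee_zero, ee_le]

lemma ee_le_one {k : ℤ} : ee k ≤ 1 ↔ k ≤ 0 := by rw [← ee_zero, ee_le]

lemma ee_pow (n : ℕ) (k : ℤ) : (ee k)^n = ee (n*k) := by
  induction n with
  | zero => simp [ee_zero]
  | succ n ih => rw [pow_succ, ih, ee_mul]; congr 1; push_cast; ring

lemma ee_inv (k : ℤ) : (ee k)⁻¹ = ee (-k) := by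
  rw [ee, ee, ← WithZero.coe_inv, ← ofAdd_neg]

lemma ee_div (i j : ℤ) : ee i / ee j = ee (i - j) := by
  rw [div_eq_mul_inv, ee_inv, ee_mul, sub_eq_add_neg]

lemma exists_ee {γ : WithZero (Multiplicative ℤ)} (h : γ ≠ 0) : ∃ k : ℤ, γ = ee k :=
  ⟨Multiplicative.toAdd (WithZero.unzero h), by rw [ee, ofAdd_toAdd, WithZero.coe_unzero]⟩

end EE

section VE

variable {K : Type*} [Field K] (v : Valuation K (WithZero (Multiplicative ℤ)))

lemma ve_mul {z w : K} {i j : ℤ} (hz : v z ≤ ee i) (hw : v w ≤ ee j) :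
    v (z*w) ≤ ee (i+j) := by
  rw [map_mul, ← ee_mul]; exact mul_le_mul' hz hw

lemma ve_mul_eq {z w : K} {i j : ℤ} (hz : v z = ee i) (hw : v w = ee j) :
    v (z*w) = ee (i+j) := by rw [map_mul, hz, hw, ee_mul]

lemma ve_add {z w : K} {i j k : ℤ} (hz : v z ≤ ee i) (hw : v w ≤ ee j)
    (hik : i ≤ k) (hjk : j ≤ k) : v (z+w) ≤ ee k :=
  le_trans (v.map_add z w) (max_le (hz.trans (ee_le.2 hik)) (hw.trans (ee_le.2 hjk)))

lemma ve_add_eq {z w : K} {i j : ℤ} (hz : v z = ee i) (hw : v w ≤ ee j)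
    (hji : j < i) : v (z+w) = ee i := by
  rw [← hz]; exact v.map_add_eq_of_lt_left (lt_of_le_of_lt hw (by rw [hz]; exact ee_lt.2 hji))

lemma ve_sub_eq {z w : K} {i j : ℤ} (hz : v z = ee i) (hw : v w ≤ ee j)
    (hji : j < i) : v (z-w) = ee i := by
  rw [← hz]; exact Valuation.map_sub_eq_of_lt_left _ (lt_of_le_of_lt hw (by rw [hz]; exact ee_lt.2 hji))

lemma ve_div_eq {z w : K} {i j : ℤ} (hz : v z = ee i) (hw : v w = ee j) :
    v (z/w) = ee (i-j) := by rw [map_div₀, hz, hw, ee_div]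

lemma ve_div_le {z w : K} {i j : ℤ} (hz : v z ≤ ee i) (hw : v w = ee j) :
    v (z/w) ≤ ee (i-j) := by
  rw [map_div₀, hw, ← ee_div, div_eq_mul_inv, div_eq_mul_inv]
  exact mul_le_mul_left hz _

lemma ve_pow_eq {z : K} {i : ℤ} (n : ℕ) (hz : v z = ee i) : v (z^n) = ee (n*i) := by
  rw [map_pow, hz, ee_pow]

lemma ve_pow_le {z : K} {i : ℤ} (n : ℕ) (hz : v z ≤ ee i) : v (z^n) ≤ ee (n*i) := by
  rw [map_pow, ← ee_pow]; exact pow_le_pow_left' hz n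

lemma ve_pow_le' {z : K} {i j : ℤ} (n : ℕ) (hz : v z ≤ ee i) (h : (n:ℤ)*i ≤ j) :
    v (z^n) ≤ ee j := (ve_pow_le v n hz).trans (ee_le.2 h)

lemma ve_two : v 2 ≤ ee 0 := by
  rw [ee_zero, show (2:K) = 1+1 by norm_num]
  exact le_trans (v.map_add 1 1) (by simp)

lemma ve_three : v 3 ≤ ee 0 := by
  rw [ee_zero, show (3:K) = 1+1+1 by norm_num]
  refine le_trans (v.map_add (1+1) 1) (max_le (le_trans (v.map_add 1 1) (by simp)) (by simp))

lemma ve_zero_iff {z : K} : v z = 0 ↔ z = 0 := Valuation.zero_iff v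

end VE

section Pole
variable {K : Type*} [Field K] (v : Valuation K (WithZero (Multiplicative ℤ)))

lemma pole_exp {a b x y : K} (ha : v a ≤ 1) (hb : v b ≤ 1)
    (hE : y^2 = x^3 + a*x + b) (hv : 1 < v x) :
    ∃ k : ℤ, 1 ≤ k ∧ v x = ee (2*k) ∧ v y = ee (3*k) := by
  have hx0 : v x ≠ 0 := by
    intro h; rw [h] at hv; exact absurd hv (by simp)
  obtain ⟨e₀, he₀⟩ := exists_ee hx0
  have he₀pos : 0 < e₀ := one_lt_ee.1 (he₀ ▸ hv)
  have hax : v (a*x) ≤ ee e₀ := by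
    have := ve_mul v (ha.trans_eq ee_zero.symm) he₀.le
    simpa using this
  have hx3 : v (x^3) = ee (3*e₀) := ve_pow_eq v 3 he₀
  have hsum : v (x^3 + a*x + b) = ee (3*e₀) := by
    have h1 : v (x^3 + a*x) = ee (3*e₀) :=
      ve_add_eq v hx3 hax (by omega)
    exact ve_add_eq v h1 (hb.trans_eq ee_zero.symm) (by omega)
  have hy2 : v (y^2) = ee (3*e₀) := by rw [hE]; exact hsum
  have hy0 : v y ≠ 0 := by
    intro h
    rw [map_pow, h] at hy2
    exact ee_ne_zero (by simpa using hy2.symm)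
  obtain ⟨f₀, hf₀⟩ := exists_ee hy0
  have h23 : 2*f₀ = 3*e₀ := by
    have := ve_pow_eq v 2 hf₀
    rw [hy2] at this
    exact ee_inj.1 this.symm
  obtain ⟨k, hk1, hk2, hk3⟩ : ∃ k : ℤ, 1 ≤ k ∧ e₀ = 2*k ∧ f₀ = 3*k := ⟨f₀ - e₀, by omega, by omega, by omega⟩
  exact ⟨k, hk1, by rw [he₀, hk2], by rw [hf₀, hk3]⟩

end Pole

section Algebra
variable {F : Type*} [Field F]

lemma ts_curve {a b x y : F} (hy : y ≠ 0) (hE : y^2 = x^3 + a*x + b) :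
    (1:F)/y = (x/y)^3 + a*(x/y)*(1/y)^2 + b*(1/y)^3 := by
  field_simp
  linear_combination hE

lemma chord_DN {a b t₁ s₁ t₂ s₂ : F}
    (h₁ : s₁ = t₁^3 + a*t₁*s₁^2 + b*s₁^3) (h₂ : s₂ = t₂^3 + a*t₂*s₂^2 + b*s₂^3) :
    (s₂ - s₁)*(1 - a*t₂*(s₁+s₂) - b*(s₁^2+s₁*s₂+s₂^2))
      = (t₂ - t₁)*(t₂^2+t₁*t₂+t₁^2 + a*s₁^2) := by
  linear_combination h₂ - h₁

lemma line_mu {L ν x₁ y₁ x₂ y₂ : F} (hy₁ : y₁ ≠ 0) (hy₂ : y₂ ≠ 0)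
    (h₁ : y₁ = L*x₁ + ν) (h₂ : y₂ = L*x₂ + ν) :
    (1/y₂ - 1/y₁)*ν = -L*(x₂/y₂ - x₁/y₁) := by
  subst h₁ h₂
  field_simp
  ring

lemma nu_inv {L ν x₁ y₁ : F} (hy₁ : y₁ ≠ 0) (hν : ν ≠ 0) (h₁ : y₁ = L*x₁ + ν) :
    (1:F)/ν = (L*x₁)/(ν*y₁) + 1/y₁ := by
  subst h₁
  field_simp

lemma tangent_LDt {a b L ν x₁ : F} (hy₁ : L*x₁+ν ≠ 0)
    (ha : a = 2*L*(L*x₁+ν) - 3*x₁^2) (hb : b = (L*x₁+ν)^2 - x₁^3 - a*x₁) :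
    -L*(1 - 2*a*(x₁/(L*x₁+ν))*(1/(L*x₁+ν)) - 3*b*(1/(L*x₁+ν))^2)
      = ν*(3*(x₁/(L*x₁+ν))^2 + a*(1/(L*x₁+ν))^2) := by
  subst hb; subst ha
  field_simp
  ring

lemma chord_key_poly {a b L ν x₁ x₂ : F}
    (ha : a = L^2*(x₁+x₂) + 2*L*ν - (x₁^2+x₁*x₂+x₂^2))
    (hb : b = (L*x₁+ν)^2 - x₁^3 - a*x₁) :
    (L*((L^2 - x₁ - x₂) - x₁) + (L*x₁+ν)) *
      (L*(-(2*a*L*ν) + 3*b*L^2)*(L*x₁+ν)*(L*x₂+ν)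
        + L*(ν^3 + a*L^2*ν - b*L^3)*(x₁*(L*x₂+ν) + x₂*(L*x₁+ν))
        + (ν^3 + a*L^2*ν - b*L^3)*(L*x₁+ν)*(L*x₂+ν))
      = ν*(ν^3 + a*L^2*ν - b*L^3)*(L*x₁+ν)*(L*x₂+ν) := by
  subst hb; subst ha
  ring

lemma tangent_key_poly {a b L ν x₁ : F}
    (ha : a = 2*L*(L*x₁+ν) - 3*x₁^2)
    (hb : b = (L*x₁+ν)^2 - x₁^3 - a*x₁) :
    (L*((L^2 - x₁ - x₁) - x₁) + (L*x₁+ν)) *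
      (L*(-(2*a*L*ν) + 3*b*L^2)*(L*x₁+ν)*(L*x₁+ν)
        + L*(ν^3 + a*L^2*ν - b*L^3)*(x₁*(L*x₁+ν) + x₁*(L*x₁+ν))
        + (ν^3 + a*L^2*ν - b*L^3)*(L*x₁+ν)*(L*x₁+ν))
      = ν*(ν^3 + a*L^2*ν - b*L^3)*(L*x₁+ν)*(L*x₁+ν) := by
  subst hb; subst ha
  ring

lemma nu_zero_x3 {a b L x₁ x₂ x₃ y₁ : F}
    (hE : y₁^2 = x₁^3 + a*x₁ + b) (hy : y₁ = L*x₁)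
    (hx₃ : x₃ = L^2 - x₁ - x₂) :
    x₃ * x₁^2 = (a*x₁ + b) - x₂*x₁^2 := by
  subst hx₃; subst hy
  linear_combination hE
end Algebra

section LocalAdd

variable {K : Type*} [Field K] (v : Valuation K (WithZero (Multiplicative ℤ)))

theorem local_add {a b x₁ y₁ x₂ y₂ x₃ y₃ L : K}
    (ha : v a ≤ 1) (hb : v b ≤ 1)
    (hE₁ : y₁^2 = x₁^3 + a*x₁ + b) (hE₂ : y₂^2 = x₂^3 + a*x₂ + b)
    (hE₃ : y₃^2 = x₃^3 + a*x₃ + b)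
    (hL : (x₁ = x₂ ∧ y₁ = y₂ ∧ L*(2*y₁) = 3*x₁^2 + a) ∨ (x₁ ≠ x₂ ∧ L*(x₁-x₂) = y₁-y₂))
    (hx₃ : x₃ = L^2 - x₁ - x₂)
    (hy₃ : y₃ = -(L*(x₃ - x₁) + y₁))
    (hv₁ : 1 < v x₁) (hv₂ : 1 < v x₂) : 1 < v x₃ := by
  have ha0 : v a ≤ ee 0 := ha.trans_eq ee_zero.symm
  have hb0 : v b ≤ ee 0 := hb.trans_eq ee_zero.symm
  obtain ⟨k₁, hk₁, hvx₁, hvy₁⟩ := pole_exp v ha hb hE₁ hv₁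
  obtain ⟨k₂, hk₂, hvx₂, hvy₂⟩ := pole_exp v ha hb hE₂ hv₂
  have hy₁0 : y₁ ≠ 0 := by
    intro h; rw [h] at hvy₁; exact ee_ne_zero ((map_zero v) ▸ hvy₁.symm)
  have hy₂0 : y₂ ≠ 0 := by
    intro h; rw [h] at hvy₂; exact ee_ne_zero ((map_zero v) ▸ hvy₂.symm)
  have hx₁0 : x₁ ≠ 0 := by
    intro h; rw [h] at hvx₁; exact ee_ne_zero ((map_zero v) ▸ hvx₁.symm)
  set m : ℤ := min k₁ k₂ with hm
  have hm1 : 1 ≤ m := le_min hk₁ hk₂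
  -- the final descent from the y-coordinate to the x-coordinate
  have final : 1 < v (L*(x₃ - x₁) + y₁) → 1 < v x₃ := by
    intro hbig
    by_contra hcon
    push_neg at hcon
    have hvy₃ : v y₃ = v (L*(x₃-x₁)+y₁) := by rw [hy₃, Valuation.map_neg]
    have h1 : v (y₃^2) ≤ 1 := by
      rw [hE₃]
      have hx3le : v x₃ ≤ ee 0 := hcon.trans_eq ee_zero.symm
      have t1 : v (x₃^3) ≤ ee 0 := by simpa using ve_pow_le v 3 hx3le
      have t2 : v (a*x₃) ≤ ee 0 := by simpa using ve_mul v ha0 hx3le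
      have := ve_add v (ve_add v t1 t2 le_rfl le_rfl) hb0 le_rfl le_rfl
      exact this.trans_eq ee_zero
    have h2 : 1 < v (y₃^2) := by
      rw [map_pow, hvy₃]
      exact one_lt_pow₀ hbig two_ne_zero
    exact absurd h1 (not_le.2 h2)
  by_cases hν0 : y₁ - L*x₁ = 0
  · -- degenerate case : the line passes through the origin
    have hyL : y₁ = L*x₁ := by linear_combination hν0
    have hid := nu_zero_x3 hE₁ hyL hx₃
    have hxx : v (x₃ * x₁^2) = ee (2*k₂ + 4*k₁) := by
      rw [hid]
      have h1 : v (x₂*x₁^2) = ee (2*k₂ + 4*k₁) := by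
        have := ve_mul_eq v hvx₂ (ve_pow_eq v 2 hvx₁)
        convert this using 2; ring
      have h2 : v (a*x₁ + b) ≤ ee (2*k₁) := by
        have t2 : v (a*x₁) ≤ ee (2*k₁) := by simpa using ve_mul v ha0 hvx₁.le
        exact ve_add v t2 hb0 le_rfl (by omega)
      have hsub : v ((a*x₁+b) - x₂*x₁^2) = v (x₂*x₁^2) :=
        Valuation.map_sub_eq_of_lt_right _ (lt_of_le_of_lt h2 (by rw [h1]; exact ee_lt.2 (by omega)))
      rw [hsub, h1]
    have hx₁2 : v (x₁^2) = ee (4*k₁) := by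
      have := ve_pow_eq v 2 hvx₁; convert this using 2; ring
    have hvx₃ : v x₃ = ee (2*k₂) := by
      have heq : v x₃ * ee (4*k₁) = ee (2*k₂) * ee (4*k₁) := by
        rw [ee_mul, ← hxx, map_mul, hx₁2]
      exact mul_right_cancel₀ ee_ne_zero heq
    rw [hvx₃]
    exact one_lt_ee.2 (by omega)
  · -- main case
    set ν : K := y₁ - L*x₁ with hνdef
    have hν : ν ≠ 0 := hν0
    have hvν0 : v ν ≠ 0 := fun h => hν ((ve_zero_iff v).1 h)
    obtain ⟨w, hw⟩ := exists_ee hvν0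
    have hy₁d : y₁ = L*x₁ + ν := by rw [hνdef]; ring
    have hy₂d : y₂ = L*x₂ + ν := by
      rcases hL with ⟨hx12, hy12, _⟩ | ⟨hx12, hrel⟩
      · rw [← hx12, ← hy12, hνdef]; ring
      · rw [hνdef]; linear_combination hrel
    -- valuations of t and s coordinates
    have ht₁ : v (x₁/y₁) = ee (2*k₁ - 3*k₁) := ve_div_eq v hvx₁ hvy₁
    have ht₂ : v (x₂/y₂) = ee (2*k₂ - 3*k₂) := ve_div_eq v hvx₂ hvy₂
    have hs₁ : v ((1:K)/y₁) = ee (0 - 3*k₁) := ve_div_eq v (by rw [map_one, ee_zero]) hvy₁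
    have hs₂ : v ((1:K)/y₂) = ee (0 - 3*k₂) := ve_div_eq v (by rw [map_one, ee_zero]) hvy₂
    -- the bound on the slope
    have hLb : v L ≤ ee (-2*m + w) := by
      rcases hL with ⟨hx12, hy12, hLt⟩ | ⟨hx12, hrel⟩
      · -- tangent case
        have ha' : a = 2*L*(L*x₁+ν) - 3*x₁^2 := by rw [← hy₁d]; linear_combination -hLt
        have hb' : b = (L*x₁+ν)^2 - x₁^3 - a*x₁ := by rw [← hy₁d]; linear_combination -hE₁
        have hy₁0' : L*x₁+ν ≠ 0 := by rw [← hy₁d]; exact hy₁0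
        have hDt := tangent_LDt hy₁0' ha' hb'
        rw [← hy₁d] at hDt
        have hvDt : v (1 - 2*a*(x₁/y₁)*(1/y₁) - 3*b*(1/y₁)^2) = ee 0 := by
          have hu : v (2*a*(x₁/y₁)*(1/y₁)) ≤ ee (((0+0) + (2*k₁-3*k₁)) + (0-3*k₁)) :=
            ve_mul v (ve_mul v (ve_mul v (ve_two v) ha0) ht₁.le) hs₁.le
          have hu' : v (3*b*(1/y₁)^2) ≤ ee ((0+0) + 2*(0-3*k₁)) :=
            ve_mul v (ve_mul v (ve_three v) hb0) (ve_pow_le' v 2 hs₁.le (by push_cast; omega))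
          have h1 : v ((1:K) - 2*a*(x₁/y₁)*(1/y₁)) = ee 0 :=
            ve_sub_eq v (by rw [map_one, ee_zero]) hu (by omega)
          exact ve_sub_eq v h1 hu' (by omega)
        have hNt : v (3*(x₁/y₁)^2 + a*(1/y₁)^2) ≤ ee (-2*k₁) := by
          have h1 : v (3*(x₁/y₁)^2) ≤ ee (0 + 2*(2*k₁-3*k₁)) :=
            ve_mul v (ve_three v) (ve_pow_le' v 2 ht₁.le (by push_cast; omega))
          have h2 : v (a*(1/y₁)^2) ≤ ee (0 + 2*(0-3*k₁)) :=
            ve_mul v ha0 (ve_pow_le' v 2 hs₁.le (by push_cast; omega))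
          exact ve_add v h1 h2 (by omega) (by omega)
        have hveq : v L * ee 0 = v (ν*(3*(x₁/y₁)^2 + a*(1/y₁)^2)) := by
          rw [← hvDt, ← Valuation.map_neg v L, ← map_mul, hDt]
        have hrhs : v (ν*(3*(x₁/y₁)^2 + a*(1/y₁)^2)) ≤ ee (w + -2*k₁) :=
          ve_mul v hw.le hNt
        have : v L ≤ ee (w + -2*k₁) := by
          rw [ee_zero, mul_one] at hveq; rw [hveq]; exact hrhs
        exact this.trans (ee_le.2 (by omega))
      · -- chord case
        have hc₁ := ts_curve hy₁0 hE₁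
        have hc₂ := ts_curve hy₂0 hE₂
        have hDN := chord_DN hc₁ hc₂
        have hlm := line_mu hy₁0 hy₂0 hy₁d hy₂d
        have htne : x₂/y₂ - x₁/y₁ ≠ 0 := by
          intro h0
          have h1 : ((1:K)/y₂ - 1/y₁)*ν = 0 := by rw [hlm, h0, mul_zero]
          have h2 : (1:K)/y₂ - 1/y₁ = 0 := (mul_eq_zero.1 h1).resolve_right hν
          have h3 : (1:K)*y₁ = 1*y₂ := by
            rw [← div_eq_div_iff hy₂0 hy₁0]; exact sub_eq_zero.1 h2
          have hy12 : y₁ = y₂ := by simpa using h3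
          have h4 : x₂*y₁ = x₁*y₂ := by
            rw [← div_eq_div_iff hy₂0 hy₁0]; exact sub_eq_zero.1 h0
          rw [← hy12] at h4
          exact hx12 (mul_right_cancel₀ hy₁0 h4).symm
        have hcancel := mul_left_cancel₀ htne (show (x₂/y₂ - x₁/y₁) *
            (-L*(1 - a*(x₂/y₂)*(1/y₁+1/y₂) - b*((1/y₁)^2+(1/y₁)*(1/y₂)+(1/y₂)^2)))
            = (x₂/y₂ - x₁/y₁) * (ν*((x₂/y₂)^2+(x₁/y₁)*(x₂/y₂)+(x₁/y₁)^2 + a*(1/y₁)^2)) by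
          linear_combination ν*hDN - (1 - a*(x₂/y₂)*(1/y₁+1/y₂) - b*((1/y₁)^2+(1/y₁)*(1/y₂)+(1/y₂)^2))*hlm)
        have hvD : v (1 - a*(x₂/y₂)*(1/y₁+1/y₂) - b*((1/y₁)^2+(1/y₁)*(1/y₂)+(1/y₂)^2)) = ee 0 := by
          have hu : v (a*(x₂/y₂)*(1/y₁+1/y₂)) ≤ ee ((0 + (2*k₂-3*k₂)) + (-3*m)) := by
            refine ve_mul v (ve_mul v ha0 ht₂.le) ?_
            exact ve_add v hs₁.le hs₂.le (by omega) (by omega)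
          have hu' : v (b*((1/y₁)^2+(1/y₁)*(1/y₂)+(1/y₂)^2)) ≤ ee (0 + (-6*m)) := by
            refine ve_mul v hb0 ?_
            have u1 : v ((1/y₁)^2) ≤ ee (-6*m) := ve_pow_le' v 2 hs₁.le (by push_cast; omega)
            have u2 : v ((1/y₁)*(1/y₂)) ≤ ee ((0-3*k₁) + (0-3*k₂)) := ve_mul v hs₁.le hs₂.le
            have u3 : v ((1/y₂)^2) ≤ ee (-6*m) := ve_pow_le' v 2 hs₂.le (by push_cast; omega)
            exact ve_add v (ve_add v u1 u2 le_rfl (by omega)) u3 le_rfl le_rfl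
          have h1 : v ((1:K) - a*(x₂/y₂)*(1/y₁+1/y₂)) = ee 0 :=
            ve_sub_eq v (by rw [map_one, ee_zero]) hu (by omega)
          exact ve_sub_eq v h1 hu' (by omega)
        have hvN : v ((x₂/y₂)^2+(x₁/y₁)*(x₂/y₂)+(x₁/y₁)^2 + a*(1/y₁)^2) ≤ ee (-2*m) := by
          have u1 : v ((x₂/y₂)^2) ≤ ee (-2*m) := ve_pow_le' v 2 ht₂.le (by push_cast; omega)
          have u2 : v ((x₁/y₁)*(x₂/y₂)) ≤ ee ((2*k₁-3*k₁) + (2*k₂-3*k₂)) := ve_mul v ht₁.le ht₂.le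
          have u3 : v ((x₁/y₁)^2) ≤ ee (-2*m) := ve_pow_le' v 2 ht₁.le (by push_cast; omega)
          have u4 : v (a*(1/y₁)^2) ≤ ee (0 + (-6*m)) :=
            ve_mul v ha0 (ve_pow_le' v 2 hs₁.le (by push_cast; omega))
          exact ve_add v (ve_add v (ve_add v u1 u2 le_rfl (by omega)) u3 le_rfl le_rfl) u4 le_rfl (by omega)
        have hveq : v L * ee 0 = v (ν*((x₂/y₂)^2+(x₁/y₁)*(x₂/y₂)+(x₁/y₁)^2 + a*(1/y₁)^2)) := by
          rw [← hvD, ← Valuation.map_neg v L, ← map_mul, hcancel]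
        have hrhs : v (ν*((x₂/y₂)^2+(x₁/y₁)*(x₂/y₂)+(x₁/y₁)^2 + a*(1/y₁)^2)) ≤ ee (w + -2*m) :=
          ve_mul v hw.le hvN
        have : v L ≤ ee (w + -2*m) := by
          rw [ee_zero, mul_one] at hveq; rw [hveq]; exact hrhs
        exact this.trans (ee_le.2 (by omega))
    -- the lower bound on v ν
    have hw3m : 3*m ≤ w := by
      have hni := nu_inv hy₁0 hν hy₁d
      have hvni : v ((1:K)/ν) = ee (0 - w) := ve_div_eq v (by rw [map_one, ee_zero]) hw
      have h1 : v ((L*x₁)/(ν*y₁)) ≤ ee ((-2*m + w + 2*k₁) - (w + 3*k₁)) :=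
        ve_div_le v (ve_mul v hLb hvx₁.le) (ve_mul_eq v hw hvy₁)
      have h2 : v ((L*x₁)/(ν*y₁) + 1/y₁) ≤ ee (-3*m) :=
        ve_add v h1 hs₁.le (by omega) (by omega)
      rw [← hni, hvni] at h2
      have := ee_le.1 h2
      omega
    -- A' and B'
    have hA' : v (ν^3 + a*L^2*ν - b*L^3) = ee (3*w) := by
      have hν3 : v (ν^3) = ee (3*w) := ve_pow_eq v 3 hw
      have h1 : v (a*L^2*ν) ≤ ee (0 + (-4*m + 2*w) + w) :=
        ve_mul v (ve_mul v ha0 (ve_pow_le' v 2 hLb (by push_cast; omega))) hw.le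
      have h2 : v (ν^3 + a*L^2*ν) = ee (3*w) :=
        ve_add_eq v hν3 h1 (by omega)
      have h3 : v (b*L^3) ≤ ee (0 + (-6*m + 3*w)) :=
        ve_mul v hb0 (ve_pow_le' v 3 hLb (by push_cast; omega))
      exact ve_sub_eq v h2 h3 (by omega)
    have hB' : v (-(2*a*L*ν) + 3*b*L^2) ≤ ee (-2*m + 2*w) := by
      have h1 : v (2*a*L*ν) ≤ ee (((0 + 0) + (-2*m + w)) + w) :=
        ve_mul v (ve_mul v (ve_mul v (ve_two v) ha0) hLb) hw.le
      have h2 : v (-(2*a*L*ν)) ≤ ee (-2*m + 2*w) := by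
        rw [Valuation.map_neg]; exact h1.trans (ee_le.2 (by omega))
      have h3 : v (3*b*L^2) ≤ ee ((0 + 0) + (-4*m + 2*w)) :=
        ve_mul v (ve_mul v (ve_three v) hb0) (ve_pow_le' v 2 hLb (by push_cast; omega))
      exact ve_add v h2 h3 le_rfl (by omega)
    -- the key identity
    have hkey : (L*(x₃ - x₁) + y₁) *
        (L*(-(2*a*L*ν) + 3*b*L^2)*y₁*y₂
          + L*(ν^3 + a*L^2*ν - b*L^3)*(x₁*y₂ + x₂*y₁)
          + (ν^3 + a*L^2*ν - b*L^3)*y₁*y₂)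
        = ν*(ν^3 + a*L^2*ν - b*L^3)*y₁*y₂ := by
      rcases hL with ⟨hx12, hy12, hLt⟩ | ⟨hx12, hrel⟩
      · -- tangent
        have ha' : a = 2*L*(L*x₁+ν) - 3*x₁^2 := by rw [← hy₁d]; linear_combination -hLt
        have hb' : b = (L*x₁+ν)^2 - x₁^3 - a*x₁ := by rw [← hy₁d]; linear_combination -hE₁
        have hthis := tangent_key_poly ha' hb'
        rw [← hy₁d] at hthis
        rw [hx₃, ← hx12, ← hy12]
        exact hthis
      · -- chord
        have hE₁' : (L*x₁+ν)^2 = x₁^3 + a*x₁ + b := by rw [← hy₁d]; exact hE₁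
        have hE₂' : (L*x₂+ν)^2 = x₂^3 + a*x₂ + b := by rw [← hy₂d]; exact hE₂
        have hfa : (x₂ - x₁) * (a - (L^2*(x₁+x₂) + 2*L*ν - (x₁^2+x₁*x₂+x₂^2))) = 0 := by
          linear_combination hE₁' - hE₂'
        have h21 : x₂ - x₁ ≠ 0 := sub_ne_zero.2 (Ne.symm hx12)
        have ha' : a = L^2*(x₁+x₂) + 2*L*ν - (x₁^2+x₁*x₂+x₂^2) :=
          sub_eq_zero.1 ((mul_eq_zero.1 hfa).resolve_left h21)
        have hb' : b = (L*x₁+ν)^2 - x₁^3 - a*x₁ := by rw [← hy₁d]; linear_combination -hE₁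
        have hthis := chord_key_poly ha' hb'
        rw [← hy₁d, ← hy₂d] at hthis
        rw [hx₃]
        exact hthis
    -- valuation bound for the big factor R
    have hvR : v (L*(-(2*a*L*ν) + 3*b*L^2)*y₁*y₂
          + L*(ν^3 + a*L^2*ν - b*L^3)*(x₁*y₂ + x₂*y₁)
          + (ν^3 + a*L^2*ν - b*L^3)*y₁*y₂) ≤ ee (-3*m + 4*w + 3*k₁ + 3*k₂) := by
      have t1 : v (L*(-(2*a*L*ν) + 3*b*L^2)*y₁*y₂)
          ≤ ee ((((-2*m+w) + (-2*m+2*w)) + 3*k₁) + 3*k₂) :=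
        ve_mul v (ve_mul v (ve_mul v hLb hB') hvy₁.le) hvy₂.le
      have t2 : v (L*(ν^3 + a*L^2*ν - b*L^3)*(x₁*y₂ + x₂*y₁))
          ≤ ee (((-2*m+w) + 3*w) + (-m + (3*k₁ + 3*k₂))) := by
        refine ve_mul v (ve_mul v hLb hA'.le) ?_
        refine ve_add v (ve_mul v hvx₁.le hvy₂.le) (ve_mul v hvx₂.le hvy₁.le) ?_ ?_ <;> omega
      have t3 : v ((ν^3 + a*L^2*ν - b*L^3)*y₁*y₂) ≤ ee ((3*w + 3*k₁) + 3*k₂) :=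
        ve_mul v (ve_mul v hA'.le hvy₁.le) hvy₂.le
      refine ve_add v (ve_add v t1 t2 ?_ ?_) t3 le_rfl ?_ <;> try omega
    -- conclude
    apply final
    have hprod : v (L*(x₃ - x₁) + y₁) * v (L*(-(2*a*L*ν) + 3*b*L^2)*y₁*y₂
          + L*(ν^3 + a*L^2*ν - b*L^3)*(x₁*y₂ + x₂*y₁)
          + (ν^3 + a*L^2*ν - b*L^3)*y₁*y₂) = ee (w + 3*w + 3*k₁ + 3*k₂) := by
      rw [← map_mul, hkey]
      have : v (ν*(ν^3 + a*L^2*ν - b*L^3)*y₁*y₂) = ee (((w + 3*w) + 3*k₁) + 3*k₂) :=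
        ve_mul_eq v (ve_mul_eq v (ve_mul_eq v hw hA') hvy₁) hvy₂
      rw [this]
    have hR0 : v (L*(-(2*a*L*ν) + 3*b*L^2)*y₁*y₂
          + L*(ν^3 + a*L^2*ν - b*L^3)*(x₁*y₂ + x₂*y₁)
          + (ν^3 + a*L^2*ν - b*L^3)*y₁*y₂) ≠ 0 := by
      intro h; rw [h, mul_zero] at hprod; exact ee_ne_zero hprod.symm
    have hY0 : v (L*(x₃ - x₁) + y₁) ≠ 0 := by
      intro h; rw [h, zero_mul] at hprod; exact ee_ne_zero hprod.symm
    obtain ⟨r, hr⟩ := exists_ee hR0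
    obtain ⟨u, hu⟩ := exists_ee hY0
    rw [hr, hu, ee_mul] at hprod
    have hur : u + r = w + 3*w + 3*k₁ + 3*k₂ := ee_inj.1 hprod
    have hrle : r ≤ -3*m + 4*w + 3*k₁ + 3*k₂ := ee_le.1 (hr ▸ hvR)
    rw [hu]
    exact one_lt_ee.2 (by omega)

end LocalAdd

open IsDedekindDomain IsDedekindDomain.HeightOneSpectrum NumberField WeierstrassCurve Filter

open scoped Classical in
/-- The normalized additive valuation of `K` at the prime `q` (with `ordAt q 0 = 0`). -/
noncomputable def ordAt {K : Type*} [Field K] [NumberField K]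
    (q : HeightOneSpectrum (𝓞 K)) (z : K) : ℤ :=
  if hz : z = 0 then 0
  else -Multiplicative.toAdd (WithZero.unzero ((q.valuation K).ne_zero_iff.mpr hz))

open scoped Classical in
lemma ordAt_neg_iff {K : Type*} [Field K] [NumberField K]
    (q : HeightOneSpectrum (𝓞 K)) (z : K) :
    ordAt q z < 0 ↔ 1 < q.valuation K z := by
  unfold ordAt
  split_ifs with hz
  · subst hz
    rw [map_zero]
    simp
  · set u := WithZero.unzero ((q.valuation K).ne_zero_iff.mpr hz) with hu
    have hcu : ((u : Multiplicative ℤ) : WithZero (Multiplicative ℤ)) = q.valuation K z :=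
      WithZero.coe_unzero _
    have key : 1 < q.valuation K z ↔ (1 : Multiplicative ℤ) < u := by
      rw [← hcu, ← WithZero.coe_one, WithZero.coe_lt_coe]
    rw [key]
    have h2 : (1 : Multiplicative ℤ) < u ↔ (0:ℤ) < Multiplicative.toAdd u := by
      rw [← Multiplicative.toAdd_lt, toAdd_one]
    rw [h2]
    omega

open scoped Classical in
theorem stmt_5
    (K : Type) [Field K] [NumberField K]
    (a b : 𝓞 K)
    (W : WeierstrassCurve.Affine K)
    (hW : W = { a₁ := 0, a₂ := 0, a₃ := 0, a₄ := algebraMap (𝓞 K) K a,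
                a₆ := algebraMap (𝓞 K) K b })
    (P : W.Point) (hP : ¬ IsOfFinAddOrder P)
    (x y : ℤ → K)
    (hxy : ∀ n : ℤ, n ≠ 0 → ∃ h : W.Nonsingular (x n) (y n),
      n • P = WeierstrassCurve.Affine.Point.some _ _ h)
    (Sbad : Set (HeightOneSpectrum (𝓞 K)))
    (hSbadFin : Sbad.Finite)
    (hSbadRam : ∀ q : HeightOneSpectrum (𝓞 K),
      (∃ p : ℕ, p.Prime ∧ q.asIdeal ^ 2 ∣ Ideal.span {(p : 𝓞 K)}) → q ∈ Sbad)
    (hSbad2 : ∀ q : HeightOneSpectrum (𝓞 K), (2 : 𝓞 K) ∈ q.asIdeal → q ∈ Sbad)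
    (hSbadSing : ∀ q : HeightOneSpectrum (𝓞 K),
      (-16 * (4 * a ^ 3 + 27 * b ^ 2) : 𝓞 K) ∈ q.asIdeal → q ∈ Sbad)
    (hSbadP : ∀ q : HeightOneSpectrum (𝓞 K),
      (ordAt q (x 1) < 0 ∨ ordAt q (y 1) < 0) → q ∈ Sbad)
    (S : ℤ → Set (HeightOneSpectrum (𝓞 K)))
    (hS : ∀ n : ℤ, n ≠ 0 →
      S n = {q : HeightOneSpectrum (𝓞 K) | q ∉ Sbad ∧ ordAt q (x n) < 0})
    :
    ∀ m n : ℤ, m ≠ 0 → n ≠ 0 →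
      S m ∩ S n = S (Int.gcd m n : ℤ) ∧
        (Int.gcd m n = 1 → S m ∩ S n = ∅) := by
  have hnegY : ∀ X Y : K, W.negY X Y = -Y := by
    intro X Y
    rw [hW]
    simp [WeierstrassCurve.Affine.negY]
  have hco : ∀ j : ℤ, j ≠ 0 →
      (y j)^2 = (x j)^3 + (algebraMap (𝓞 K) K a)*(x j) + (algebraMap (𝓞 K) K b) := by
    intro j hj
    obtain ⟨h, _⟩ := hxy j hj
    have h1 := (WeierstrassCurve.Affine.equation_iff (W := W) (x j) (y j)).1 h.1
    rw [hW] at h1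
    simp at h1
    linear_combination h1
  have hxneg : ∀ j : ℤ, j ≠ 0 → x (-j) = x j := by
    intro j hj
    obtain ⟨h, e⟩ := hxy j hj
    obtain ⟨h', e'⟩ := hxy (-j) (neg_ne_zero.2 hj)
    have hchain : WeierstrassCurve.Affine.Point.some _ _ h' =
        WeierstrassCurve.Affine.Point.some _ _ ((WeierstrassCurve.Affine.nonsingular_neg _ _).2 h) := by
      rw [← WeierstrassCurve.Affine.Point.neg_some, ← e, ← e', neg_zsmul]
      exact h
    injection hchain
  have haddpt : ∀ j k : ℤ, j ≠ 0 → k ≠ 0 → j + k ≠ 0 →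
      ∃ L : K, ((x j = x k ∧ y j = y k ∧ L*(2*(y j)) = 3*(x j)^2 + (algebraMap (𝓞 K) K a))
          ∨ (x j ≠ x k ∧ L*(x j - x k) = y j - y k))
        ∧ x (j+k) = L^2 - x j - x k
        ∧ y (j+k) = -(L*(x (j+k) - x j) + y j) := by
    intro j k hj hk hjk
    obtain ⟨h₁, e₁⟩ := hxy j hj
    obtain ⟨h₂, e₂⟩ := hxy k hk
    obtain ⟨h₃, e₃⟩ := hxy (j+k) hjk
    have hsum : WeierstrassCurve.Affine.Point.some _ _ h₃ =
        WeierstrassCurve.Affine.Point.some _ _ h₁ + WeierstrassCurve.Affine.Point.some _ _ h₂ := by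
      rw [← e₁, ← e₂, ← e₃, ← add_zsmul]
    have hvert : ¬(x j = x k ∧ y j = W.negY (x k) (y k)) := by
      rintro ⟨hxx, hyy⟩
      rw [WeierstrassCurve.Affine.Point.add_of_Y_eq hxx hyy] at hsum
      exact WeierstrassCurve.Affine.Point.some_ne_zero h₃ hsum
    have himp : x j = x k → y j ≠ W.negY (x k) (y k) := by tauto
    rw [WeierstrassCurve.Affine.Point.add_some hvert] at hsum
    injection hsum with hX hY
    refine ⟨W.slope (x j) (x k) (y j) (y k), ?_, ?_, ?_⟩
    · by_cases hxx : x j = x k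
      · have hyne := himp hxx
        have hy12 : y j = y k := WeierstrassCurve.Affine.Y_eq_of_Y_ne h₁.1 h₂.1 hxx hyne
        left
        refine ⟨hxx, hy12, ?_⟩
        have h2y : y j ≠ -(y j) := by
          intro hcon
          apply hyne
          rw [hnegY, ← hy12, ← hcon]
        have h2y' : 2*(y j) ≠ 0 := by
          intro hcon
          apply h2y
          linear_combination hcon
        have hy0 : y j ≠ 0 := by
          intro h0
          apply h2y'
          rw [h0]; ring
        rw [WeierstrassCurve.Affine.slope_of_Y_ne hxx hyne, hnegY, hW]
        simp
        rw [div_mul_eq_mul_div, div_eq_iff (show y j + y j ≠ 0 by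
          intro h0; apply h2y'; linear_combination h0)]
        ring
      · right
        refine ⟨hxx, ?_⟩
        rw [WeierstrassCurve.Affine.slope_of_X_ne hxx]
        field_simp [sub_ne_zero.2 hxx]
    · rw [hX, hW]
      simp [WeierstrassCurve.Affine.addX]
      try ring
    · rw [hY, hX, hW]
      simp [WeierstrassCurve.Affine.addY, WeierstrassCurve.Affine.negAddY,
        WeierstrassCurve.Affine.negY, WeierstrassCurve.Affine.addX]
      try ring
  -- main local statement
  intro m n hm hn
  have hg : (Int.gcd m n : ℤ) ≠ 0 := by
    simp only [ne_eq, Int.natCast_eq_zero]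
    rw [Int.gcd_eq_zero_iff]
    tauto
  have crux : ∀ q : HeightOneSpectrum (𝓞 K), q ∉ Sbad →
      ((ordAt q (x m) < 0 ∧ ordAt q (x n) < 0) ↔ ordAt q (x (Int.gcd m n)) < 0) := by
    intro q hq
    have hva : q.valuation K (algebraMap (𝓞 K) K a) ≤ 1 := q.valuation_le_one a
    have hvb : q.valuation K (algebraMap (𝓞 K) K b) ≤ 1 := q.valuation_le_one b
    let T : AddSubgroup ℤ := {
      carrier := {j : ℤ | j = 0 ∨ 1 < q.valuation K (x j)}
      zero_mem' := Or.inl rfl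
      neg_mem' := by
        intro j hj
        by_cases hj0 : j = 0
        · subst hj0; exact Or.inl (by simp)
        · refine Or.inr ?_
          rw [hxneg j hj0]
          exact hj.resolve_left hj0
      add_mem' := by
        intro j k hj hk
        by_cases hj0 : j = 0
        · subst hj0; simpa using hk
        by_cases hk0 : k = 0
        · subst hk0; simpa using hj
        by_cases hjk : j + k = 0
        · exact Or.inl hjk
        refine Or.inr ?_
        obtain ⟨L, hdich, hx3, hy3⟩ := haddpt j k hj0 hk0 hjk
        exact local_add (q.valuation K) hva hvb (hco j hj0) (hco k hk0) (hco _ hjk)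
          hdich hx3 hy3 (hj.resolve_left hj0) (hk.resolve_left hk0) }
    have hmemT : ∀ j : ℤ, j ≠ 0 → (j ∈ T ↔ ordAt q (x j) < 0) := by
      intro j hj
      rw [ordAt_neg_iff]
      constructor
      · intro h
        exact h.resolve_left hj
      · exact Or.inr
    have hdvd_mem : ∀ (j c : ℤ), j ∈ T → j * c ∈ T := by
      intro j c hj
      have := T.zsmul_mem hj c
      rwa [zsmul_eq_mul, mul_comm] at this
    constructor
    · rintro ⟨h1, h2⟩
      refine (hmemT _ hg).1 ?_
      rw [Int.gcd_eq_gcd_ab]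
      exact T.add_mem (hdvd_mem m _ ((hmemT m hm).2 h1)) (hdvd_mem n _ ((hmemT n hn).2 h2))
    · intro h
      have hgT : (Int.gcd m n : ℤ) ∈ T := (hmemT _ hg).2 h
      constructor
      · refine (hmemT m hm).1 ?_
        have hd : (Int.gcd m n : ℤ) * (m / (Int.gcd m n : ℤ)) ∈ T := hdvd_mem _ _ hgT
        rwa [Int.mul_ediv_cancel' (Int.gcd_dvd_left m n)] at hd
      · refine (hmemT n hn).1 ?_
        have hd : (Int.gcd m n : ℤ) * (n / (Int.gcd m n : ℤ)) ∈ T := hdvd_mem _ _ hgT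
        rwa [Int.mul_ediv_cancel' (Int.gcd_dvd_right m n)] at hd
  have hpart1 : S m ∩ S n = S (Int.gcd m n : ℤ) := by
    ext q
    rw [hS m hm, hS n hn, hS _ hg]
    simp only [Set.mem_inter_iff, Set.mem_setOf_eq]
    constructor
    · rintro ⟨⟨hq, h1⟩, ⟨_, h2⟩⟩
      exact ⟨hq, (crux q hq).1 ⟨h1, h2⟩⟩
    · rintro ⟨hq, h⟩
      obtain ⟨h1, h2⟩ := (crux q hq).2 h
      exact ⟨⟨hq, h1⟩, ⟨hq, h2⟩⟩
  refine ⟨hpart1, ?_⟩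
  intro h1
  rw [hpart1, h1, Nat.cast_one]
  ext q
  rw [hS 1 one_ne_zero]
  simp only [Set.mem_setOf_eq, Set.mem_empty_iff_false, iff_false, not_and]
  intro hq
  intro hlt
  exact hq (hSbadP q (Or.inl (by exact_mod_cast hlt)))
end

section
/- Assume the primitive divisor hypothesis. Then for all integers k, n ≥ 1: S_k ⊆ S_n if and only if k divides n. In particular, if n₁, n₂ ≥ 1 satisfy S_{n₁} = S_{n₂}, then n₁ = n₂. -/
open IsDedekindDomain IsDedekindDomain.HeightOneSpectrum NumberField WeierstrassCurve Filter

open scoped Multiplicative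

namespace OrdAux

variable {K : Type*} [Field K] [NumberField K] (q : HeightOneSpectrum (𝓞 K))

/-- `Vge q c z` means `v_q(z) ≥ c` (with `v_q(0) = ∞`). -/
def Vge (c : ℤ) (z : K) : Prop :=
  q.valuation K z ≤ ((Multiplicative.ofAdd (-c) : Multiplicative ℤ) : WithZero (Multiplicative ℤ))

variable {q}

lemma val_eq_ofAdd {z : K} (hz : z ≠ 0) :
    q.valuation K z = ((Multiplicative.ofAdd (-ordAt q z) : Multiplicative ℤ) : WithZero (Multiplicative ℤ)) := by
  rw [ordAt, dif_neg hz, neg_neg, ofAdd_toAdd, WithZero.coe_unzero]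

lemma vge_iff_ord {c : ℤ} {z : K} (hz : z ≠ 0) : Vge q c z ↔ c ≤ ordAt q z := by
  rw [Vge, val_eq_ofAdd hz, WithZero.coe_le_coe, Multiplicative.ofAdd_le, neg_le_neg_iff]

lemma vge_zero (c : ℤ) : Vge q c (0 : K) := by
  simp [Vge, Valuation.map_zero]

lemma vge_mono {c d : ℤ} {z : K} (h : c ≤ d) (hz : Vge q d z) : Vge q c z := by
  refine hz.trans ?_
  rw [WithZero.coe_le_coe, Multiplicative.ofAdd_le]
  omega

lemma vge_mul {c d : ℤ} {z w : K} (hz : Vge q c z) (hw : Vge q d w) :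
    Vge q (c + d) (z * w) := by
  rw [Vge, map_mul]
  calc q.valuation K z * q.valuation K w
      ≤ ((Multiplicative.ofAdd (-c) : Multiplicative ℤ) : WithZero (Multiplicative ℤ)) *
        ((Multiplicative.ofAdd (-d) : Multiplicative ℤ) : WithZero (Multiplicative ℤ)) := mul_le_mul' hz hw
    _ = _ := by rw [← WithZero.coe_mul, ← ofAdd_add]; ring_nf

lemma vge_add {c : ℤ} {z w : K} (hz : Vge q c z) (hw : Vge q c w) : Vge q c (z + w) :=
  le_trans ((q.valuation K).map_add z w) (max_le hz hw)

lemma vge_neg {c : ℤ} {z : K} (hz : Vge q c z) : Vge q c (-z) := by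
  rwa [Vge, Valuation.map_neg]

lemma vge_algebraMap (r : 𝓞 K) : Vge q 0 (algebraMap (𝓞 K) K r) := by
  have := q.valuation_le_one (K := K) r
  simpa [Vge] using this

lemma ord_mul {z w : K} (hz : z ≠ 0) (hw : w ≠ 0) :
    ordAt q (z * w) = ordAt q z + ordAt q w := by
  have hzw : z * w ≠ 0 := mul_ne_zero hz hw
  have : q.valuation K (z * w) = q.valuation K z * q.valuation K w := map_mul _ _ _
  rw [val_eq_ofAdd hzw, val_eq_ofAdd hz, val_eq_ofAdd hw, ← WithZero.coe_mul, ← ofAdd_add,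
    WithZero.coe_inj] at this
  have := Multiplicative.ofAdd.injective this
  omega

lemma ord_div {z w : K} (hz : z ≠ 0) (hw : w ≠ 0) :
    ordAt q (z / w) = ordAt q z - ordAt q w := by
  have h : z / w * w = z := div_mul_cancel₀ z hw
  have := ord_mul (q := q) (div_ne_zero hz hw) hw
  rw [h] at this
  omega

/-- Ultrametric domination: if `v(w) > v(z)` then `v(z+w) = v(z)`. -/
lemma ord_add_dominant {z w : K} (hz : z ≠ 0) (hw : Vge q (ordAt q z + 1) w) :
    z + w ≠ 0 ∧ ordAt q (z + w) = ordAt q z := by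
  have hlt : q.valuation K w < q.valuation K z := by
    refine lt_of_le_of_lt hw ?_
    rw [val_eq_ofAdd hz, WithZero.coe_lt_coe, Multiplicative.ofAdd_lt]
    omega
  have heq : q.valuation K (z + w) = q.valuation K z := by
    rw [add_comm]; exact Valuation.map_add_eq_of_lt_right _ hlt
  have hne : z + w ≠ 0 := by
    intro h0
    rw [h0, Valuation.map_zero] at heq
    exact hz ((q.valuation K).zero_iff.mp heq.symm)
  refine ⟨hne, ?_⟩
  rw [val_eq_ofAdd hne, val_eq_ofAdd hz, WithZero.coe_inj] at heq
  have := Multiplicative.ofAdd.injective heq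
  omega

lemma vge_of_ord {c : ℤ} {z : K} (h : c ≤ ordAt q z) (hz : z ≠ 0) : Vge q c z :=
  (vge_iff_ord hz).mpr h

end OrdAux

namespace OrdAux

variable {K : Type*} [Field K] [NumberField K] {q : HeightOneSpectrum (𝓞 K)}

lemma ord_neg (z : K) : ordAt q (-z) = ordAt q z := by
  rcases eq_or_ne z 0 with rfl | hz
  · simp
  have hnz : -z ≠ 0 := neg_ne_zero.mpr hz
  have h : q.valuation K (-z) = q.valuation K z := Valuation.map_neg _ _
  rw [val_eq_ofAdd hnz, val_eq_ofAdd hz, WithZero.coe_inj] at h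
  have := Multiplicative.ofAdd.injective h
  omega

lemma ord_one : ordAt q (1 : K) = 0 := by
  have h : q.valuation K (1 : K) = 1 := map_one _
  have h1 : (1 : K) ≠ 0 := one_ne_zero
  rw [val_eq_ofAdd h1] at h
  have : ((Multiplicative.ofAdd (-ordAt q (1:K)) : Multiplicative ℤ) : WithZero (Multiplicative ℤ)) =
      ((Multiplicative.ofAdd (0 : ℤ) : Multiplicative ℤ) : WithZero (Multiplicative ℤ)) := by
    rw [h]; rfl
  rw [WithZero.coe_inj] at this
  have := Multiplicative.ofAdd.injective this
  omega

lemma ord_pow {z : K} (hz : z ≠ 0) (n : ℕ) : ordAt q (z ^ n) = n * ordAt q z := by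
  induction n with
  | zero => simpa using ord_one
  | succ n ih =>
      rw [pow_succ, ord_mul (pow_ne_zero n hz) hz, ih]
      push_cast; ring

lemma ord_ne_zero {z : K} (h : ordAt q z < 0) : z ≠ 0 := by
  intro h0; rw [h0] at h; simp [ordAt] at h

/-- For a point with `v(x) < 0` on `y² = x³ + Ax + B` with integral `A`, `B`,
we get `v(x) = -2t`, `v(y) = -3t`. -/
lemma kernel_aux {A B x y : K} (hA : Vge q 0 A) (hB : Vge q 0 B)
    (e : y ^ 2 = x ^ 3 + A * x + B) (hx : ordAt q x < 0) :
    ∃ t : ℤ, 1 ≤ t ∧ x ≠ 0 ∧ y ≠ 0 ∧ ordAt q x = -(2 * t) ∧ ordAt q y = -(3 * t) := by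
  have hx0 : x ≠ 0 := ord_ne_zero hx
  set m := ordAt q x with hm
  have hx3 : x ^ 3 ≠ 0 := pow_ne_zero 3 hx0
  have hx3o : ordAt q (x ^ 3) = 3 * m := by rw [ord_pow hx0]; norm_num; rfl
  have hrest : Vge q (ordAt q (x ^ 3) + 1) (A * x + B) := by
    rw [hx3o]
    refine vge_add (vge_mono ?_ (vge_mul hA (vge_of_ord le_rfl hx0))) (vge_mono ?_ hB) <;> omega
  have hdom := ord_add_dominant hx3 hrest
  have hy2 : y ^ 2 = x ^ 3 + (A * x + B) := by rw [e]; ring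
  have hy0 : y ≠ 0 := by
    intro h0
    rw [h0] at hy2
    exact hdom.1 (by rw [← hy2]; ring)
  have h2 : ordAt q (y ^ 2) = 3 * m := by rw [hy2, hdom.2, hx3o]
  rw [ord_pow hy0] at h2
  refine ⟨m - ordAt q y, by omega, hx0, hy0, by omega, by omega⟩

end OrdAux

namespace OrdAux

variable {K : Type*} [Field K] [NumberField K] {q : HeightOneSpectrum (𝓞 K)}

/-- Tangent case: doubling a kernel point stays in the kernel. -/
lemma core_tangent {A B x₁ y₁ L : K} (hA : Vge q 0 A) (hB : Vge q 0 B)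
    (e₁ : y₁ ^ 2 = x₁ ^ 3 + A * x₁ + B) (hx : ordAt q x₁ < 0)
    (hL : L = (3 * x₁ ^ 2 + A) / (2 * y₁)) :
    ordAt q (L ^ 2 - x₁ - x₁) < 0 := by
  obtain ⟨t, ht, hx0, hy0, hmx, hmy⟩ := kernel_aux hA hB e₁ hx
  have h2 : (2 : K) ≠ 0 := two_ne_zero
  have h2v : Vge q 0 (2 : K) := by
    have h := vge_algebraMap (q := q) (2 : 𝓞 K)
    rwa [map_ofNat] at h
  have hord2 : 0 ≤ ordAt q (2 : K) := (vge_iff_ord h2).mp h2v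
  have h2y : (2 : K) * y₁ ≠ 0 := mul_ne_zero h2 hy0
  set D := x₁ ^ 3 - A * x₁ - 2 * B with hDdef
  have hDsplit : D = x₁ ^ 3 + (-(A * x₁) - 2 * B) := by rw [hDdef]; ring
  have hx3o : ordAt q (x₁ ^ 3) = -(6 * t) := by rw [ord_pow hx0, hmx]; ring
  have hrest : Vge q (ordAt q (x₁ ^ 3) + 1) (-(A * x₁) - 2 * B) := by
    rw [hx3o]
    have l1 : Vge q (-(6*t) + 1) (-(A * x₁)) :=
      vge_neg (vge_mono (by omega) (vge_mul hA (vge_of_ord (le_of_eq hmx.symm) hx0)))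
    have l2 : Vge q (-(6*t) + 1) (-(2 * B)) :=
      vge_neg (vge_mono (by omega) (vge_mul h2v hB))
    have := vge_add l1 l2
    rwa [← sub_eq_add_neg] at this
  have hD : D ≠ 0 ∧ ordAt q D = -(6 * t) := by
    rw [hDsplit]
    have := ord_add_dominant (pow_ne_zero 3 hx0) hrest
    rw [hx3o] at this
    exact this
  set N := y₁ - L * x₁ with hNdef
  have hnu : N = -D / (2 * y₁) := by
    rw [hNdef, hL, hDdef]
    field_simp
    linear_combination 2 * e₁
  have hN0 : N ≠ 0 := by
    rw [hnu]
    exact div_ne_zero (neg_ne_zero.mpr hD.1) h2y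
  have hNo : ordAt q N = -(3 * t) - ordAt q (2 : K) := by
    rw [hnu, ord_div (neg_ne_zero.mpr hD.1) h2y, ord_neg, hD.2, ord_mul h2 hy0, hmy]
    ring
  -- main identity
  have hL2 : L * (2 * y₁) = 3 * x₁ ^ 2 + A := by rw [hL]; field_simp
  have hid : (L ^ 2 - x₁ - x₁) * (x₁ * x₁) = N ^ 2 - B := by
    rw [hNdef]
    linear_combination (-1 : K) * e₁ + x₁ * hL2
  have hN2o : ordAt q (N ^ 2) = -(6 * t) - 2 * ordAt q (2 : K) := by
    rw [ord_pow hN0, hNo]; ring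
  have hfin : N ^ 2 - B ≠ 0 ∧ ordAt q (N ^ 2 - B) = ordAt q (N ^ 2) := by
    have : N ^ 2 - B = N ^ 2 + (-B) := by ring
    rw [this]
    exact ord_add_dominant (pow_ne_zero 2 hN0) (vge_neg (vge_mono (by omega) hB))
  have hx30 : L ^ 2 - x₁ - x₁ ≠ 0 := by
    intro h0
    rw [h0, zero_mul] at hid
    exact hfin.1 hid.symm
  have := ord_mul (q := q) hx30 (mul_ne_zero hx0 hx0)
  rw [hid, hfin.2, hN2o, ord_mul hx0 hx0, hmx] at this
  omega


end OrdAux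

namespace OrdAux

variable {K : Type*} [Field K] [NumberField K] {q : HeightOneSpectrum (𝓞 K)}

/-- Chord case, distinct valuations (`t₁ < t₂`). -/
lemma core_chord_lt {A B x₁ y₁ x₂ y₂ L : K} {t₁ t₂ : ℤ} (hA : Vge q 0 A) (hB : Vge q 0 B)
    (e₁ : y₁ ^ 2 = x₁ ^ 3 + A * x₁ + B) (e₂ : y₂ ^ 2 = x₂ ^ 3 + A * x₂ + B)
    (hx₁0 : x₁ ≠ 0) (hy₁0 : y₁ ≠ 0) (hx₂0 : x₂ ≠ 0) (hy₂0 : y₂ ≠ 0)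
    (hmx₁ : ordAt q x₁ = -(2 * t₁)) (hmy₁ : ordAt q y₁ = -(3 * t₁))
    (hmx₂ : ordAt q x₂ = -(2 * t₂)) (hmy₂ : ordAt q y₂ = -(3 * t₂))
    (ht₁ : 1 ≤ t₁) (hlt : t₁ < t₂)
    (hL : L * (x₁ - x₂) = y₁ - y₂) :
    ordAt q (L ^ 2 - x₁ - x₂) < 0 := by
  have h2v : Vge q 0 (2 : K) := by
    have h := vge_algebraMap (q := q) (2 : 𝓞 K)
    rwa [map_ofNat] at h
  have hd : x₂ - x₁ ≠ 0 ∧ ordAt q (x₂ - x₁) = -(2 * t₂) := by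
    have hsplit : x₂ - x₁ = x₂ + (-x₁) := by ring
    have h := ord_add_dominant hx₂0 (w := -x₁)
      (vge_neg (vge_of_ord (by rw [hmx₂, hmx₁]; omega) hx₁0))
    rw [hsplit]
    exact ⟨h.1, by rw [h.2, hmx₂]⟩
  set N := x₁ * x₂ ^ 2 + (x₁ ^ 2 * x₂ + A * x₁ + A * x₂ + 2 * B - 2 * (y₁ * y₂)) with hNdef
  have hmain0 : x₁ * x₂ ^ 2 ≠ 0 := mul_ne_zero hx₁0 (pow_ne_zero 2 hx₂0)
  have hmaino : ordAt q (x₁ * x₂ ^ 2) = -(2 * t₁) - 4 * t₂ := by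
    rw [ord_mul hx₁0 (pow_ne_zero 2 hx₂0), ord_pow hx₂0, hmx₁, hmx₂]; ring
  have hrest : Vge q (ordAt q (x₁ * x₂ ^ 2) + 1)
      (x₁ ^ 2 * x₂ + A * x₁ + A * x₂ + 2 * B - 2 * (y₁ * y₂)) := by
    rw [hmaino]
    have o1 : ordAt q (x₁ ^ 2 * x₂) = -(4 * t₁) - 2 * t₂ := by
      rw [ord_mul (pow_ne_zero 2 hx₁0) hx₂0, ord_pow hx₁0, hmx₁, hmx₂]; ring
    have l1 : Vge q (-(2 * t₁) - 4 * t₂ + 1) (x₁ ^ 2 * x₂) :=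
      vge_mono (by omega) (vge_of_ord (le_of_eq o1.symm) (mul_ne_zero (pow_ne_zero 2 hx₁0) hx₂0))
    have l2 : Vge q (-(2 * t₁) - 4 * t₂ + 1) (A * x₁) :=
      vge_mono (by omega) (vge_mul hA (vge_of_ord (le_of_eq hmx₁.symm) hx₁0))
    have l3 : Vge q (-(2 * t₁) - 4 * t₂ + 1) (A * x₂) :=
      vge_mono (by omega) (vge_mul hA (vge_of_ord (le_of_eq hmx₂.symm) hx₂0))
    have l4 : Vge q (-(2 * t₁) - 4 * t₂ + 1) (2 * B) := vge_mono (by omega) (vge_mul h2v hB)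
    have o5 : ordAt q (y₁ * y₂) = -(3 * t₁) + -(3 * t₂) := by
      rw [ord_mul hy₁0 hy₂0, hmy₁, hmy₂]
    have l5 : Vge q (-(2 * t₁) - 4 * t₂ + 1) (-(2 * (y₁ * y₂))) :=
      vge_neg (vge_mono (by omega) (vge_mul h2v (vge_of_ord (le_of_eq o5.symm)
        (mul_ne_zero hy₁0 hy₂0))))
    have := vge_add (vge_add (vge_add (vge_add l1 l2) l3) l4) l5
    rwa [← sub_eq_add_neg] at this
  have hN : N ≠ 0 ∧ ordAt q N = -(2 * t₁) - 4 * t₂ := by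
    rw [hNdef]
    have := ord_add_dominant hmain0 hrest
    rwa [hmaino] at this
  have hid : (L ^ 2 - x₁ - x₂) * (x₂ - x₁) ^ 2 = N := by
    rw [hNdef]
    linear_combination e₁ + e₂ + (L * (x₁ - x₂) + (y₁ - y₂)) * hL
  have hx30 : L ^ 2 - x₁ - x₂ ≠ 0 := by
    intro h0; rw [h0, zero_mul] at hid; exact hN.1 hid.symm
  have := ord_mul (q := q) hx30 (pow_ne_zero 2 hd.1)
  rw [hid, hN.2, ord_pow hd.1, hd.2] at this
  omega

/-- Chord case, equal valuations. -/
lemma core_chord_eq {A B x₁ y₁ x₂ y₂ L : K} {t : ℤ} (hA : Vge q 0 A) (hB : Vge q 0 B)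
    (e₁ : y₁ ^ 2 = x₁ ^ 3 + A * x₁ + B) (e₂ : y₂ ^ 2 = x₂ ^ 3 + A * x₂ + B)
    (hx₁0 : x₁ ≠ 0) (hy₁0 : y₁ ≠ 0) (hx₂0 : x₂ ≠ 0) (hy₂0 : y₂ ≠ 0)
    (hmx₁ : ordAt q x₁ = -(2 * t)) (hmy₁ : ordAt q y₁ = -(3 * t))
    (hmx₂ : ordAt q x₂ = -(2 * t)) (hmy₂ : ordAt q y₂ = -(3 * t))
    (ht₁ : 1 ≤ t) (hx12 : x₁ ≠ x₂)
    (hLdef : L = (y₁ - y₂) / (x₁ - x₂)) :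
    ordAt q (L ^ 2 - x₁ - x₂) < 0 := by
  have hx12' : x₁ - x₂ ≠ 0 := sub_ne_zero.mpr hx12
  have hL : L * (x₁ - x₂) = y₁ - y₂ := by rw [hLdef]; field_simp
  set z₁ := x₁ / y₁ with hz₁def
  set z₂ := x₂ / y₂ with hz₂def
  set w₁ := 1 / y₁ with hw₁def
  set w₂ := 1 / y₂ with hw₂def
  have hz₁0 : z₁ ≠ 0 := div_ne_zero hx₁0 hy₁0
  have hz₂0 : z₂ ≠ 0 := div_ne_zero hx₂0 hy₂0
  have hw₁0 : w₁ ≠ 0 := div_ne_zero one_ne_zero hy₁0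
  have hw₂0 : w₂ ≠ 0 := div_ne_zero one_ne_zero hy₂0
  have hz₁o : ordAt q z₁ = t := by rw [hz₁def, ord_div hx₁0 hy₁0, hmx₁, hmy₁]; ring
  have hz₂o : ordAt q z₂ = t := by rw [hz₂def, ord_div hx₂0 hy₂0, hmx₂, hmy₂]; ring
  have hw₁o : ordAt q w₁ = 3 * t := by
    rw [hw₁def, ord_div one_ne_zero hy₁0, ord_one, hmy₁]; ring
  have hw₂o : ordAt q w₂ = 3 * t := by
    rw [hw₂def, ord_div one_ne_zero hy₂0, ord_one, hmy₂]; ring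
  have f₁ : w₁ = z₁ ^ 3 + A * z₁ * w₁ ^ 2 + B * w₁ ^ 3 := by
    rw [hz₁def, hw₁def]
    have h : (x₁ / y₁) ^ 3 + A * (x₁ / y₁) * (1 / y₁) ^ 2 + B * (1 / y₁) ^ 3
        = (x₁ ^ 3 + A * x₁ + B) / y₁ ^ 3 := by
      field_simp
    rw [h, ← e₁, div_eq_div_iff hy₁0 (pow_ne_zero 3 hy₁0)]
    ring
  have f₂ : w₂ = z₂ ^ 3 + A * z₂ * w₂ ^ 2 + B * w₂ ^ 3 := by
    rw [hz₂def, hw₂def]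
    have h : (x₂ / y₂) ^ 3 + A * (x₂ / y₂) * (1 / y₂) ^ 2 + B * (1 / y₂) ^ 3
        = (x₂ ^ 3 + A * x₂ + B) / y₂ ^ 3 := by
      field_simp
    rw [h, ← e₂, div_eq_div_iff hy₂0 (pow_ne_zero 3 hy₂0)]
    ring
  clear_value z₁ z₂ w₁ w₂
  -- z-coordinates are distinct
  have hzne : z₁ ≠ z₂ := by
    intro h
    have hU' : (1 : K) - A * z₁ * (w₁ + w₂) - B * (w₁ ^ 2 + w₁ * w₂ + w₂ ^ 2) ≠ 0 := by
      have hsplit : (1 : K) - A * z₁ * (w₁ + w₂) - B * (w₁ ^ 2 + w₁ * w₂ + w₂ ^ 2)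
          = 1 + (-(A * z₁ * (w₁ + w₂)) - B * (w₁ ^ 2 + w₁ * w₂ + w₂ ^ 2)) := by ring
      rw [hsplit]
      refine (ord_add_dominant (q := q) one_ne_zero ?_).1
      rw [ord_one, zero_add, sub_eq_add_neg]
      have l1 : Vge q 1 (-(A * z₁ * (w₁ + w₂))) := by
        refine vge_neg (vge_mono (by omega) (vge_mul (vge_mul hA
          (vge_of_ord (le_of_eq hz₁o.symm) hz₁0)) (vge_add (vge_of_ord (le_of_eq hw₁o.symm) hw₁0)
          (vge_of_ord (le_of_eq hw₂o.symm) hw₂0))))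
      have l2 : Vge q 1 (-(B * (w₁ ^ 2 + w₁ * w₂ + w₂ ^ 2))) := by
        have p1 : Vge q (6 * t) (w₁ ^ 2) := vge_of_ord (le_of_eq (by rw [ord_pow hw₁0, hw₁o]; ring))
          (pow_ne_zero 2 hw₁0)
        have p2 : Vge q (6 * t) (w₁ * w₂) := vge_of_ord (le_of_eq (by
          rw [ord_mul hw₁0 hw₂0, hw₁o, hw₂o]; ring)) (mul_ne_zero hw₁0 hw₂0)
        have p3 : Vge q (6 * t) (w₂ ^ 2) := vge_of_ord (le_of_eq (by rw [ord_pow hw₂0, hw₂o]; ring))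
          (pow_ne_zero 2 hw₂0)
        exact vge_neg (vge_mono (by omega) (vge_mul hB (vge_add (vge_add p1 p2) p3)))
      exact vge_add l1 l2
    have hfac : (w₁ - w₂) * ((1 : K) - A * z₁ * (w₁ + w₂) - B * (w₁ ^ 2 + w₁ * w₂ + w₂ ^ 2)) = 0 := by
      linear_combination f₁ - f₂ + (z₁ ^ 2 + z₁ * z₂ + z₂ ^ 2 + A * w₂ ^ 2) * h
    have hw : w₁ = w₂ := by
      rcases mul_eq_zero.mp hfac with h' | h'
      · exact sub_eq_zero.mp h'
      · exact absurd h' hU'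
    have hy : y₁ = y₂ := by
      rw [hw₁def, hw₂def] at hw
      field_simp at hw
      exact hw.symm
    apply hx12
    rw [hz₁def, hz₂def, hy] at h
    field_simp at h
    exact h
  -- the slope in (z,w)-coordinates
  have hz21 : z₂ - z₁ ≠ 0 := sub_ne_zero.mpr fun h => hzne h.symm
  set μ := (w₂ - w₁) / (z₂ - z₁) with hμdef
  set U := (1 : K) - A * z₂ * (w₂ + w₁) - B * (w₂ ^ 2 + w₂ * w₁ + w₁ ^ 2) with hUdef
  have hU : U ≠ 0 ∧ ordAt q U = ordAt q (1 : K) := by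
    rw [hUdef]
    have hsplit : (1 : K) - A * z₂ * (w₂ + w₁) - B * (w₂ ^ 2 + w₂ * w₁ + w₁ ^ 2)
        = 1 + (-(A * z₂ * (w₂ + w₁)) - B * (w₂ ^ 2 + w₂ * w₁ + w₁ ^ 2)) := by ring
    rw [hsplit]
    refine ord_add_dominant (q := q) one_ne_zero ?_
    rw [ord_one, zero_add, sub_eq_add_neg]
    have l1 : Vge q 1 (-(A * z₂ * (w₂ + w₁))) :=
      vge_neg (vge_mono (by omega) (vge_mul (vge_mul hA
        (vge_of_ord (le_of_eq hz₂o.symm) hz₂0)) (vge_add (vge_of_ord (le_of_eq hw₂o.symm) hw₂0)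
        (vge_of_ord (le_of_eq hw₁o.symm) hw₁0))))
    have l2 : Vge q 1 (-(B * (w₂ ^ 2 + w₂ * w₁ + w₁ ^ 2))) := by
      have p1 : Vge q (6 * t) (w₂ ^ 2) := vge_of_ord (le_of_eq (by rw [ord_pow hw₂0, hw₂o]; ring))
        (pow_ne_zero 2 hw₂0)
      have p2 : Vge q (6 * t) (w₂ * w₁) := vge_of_ord (le_of_eq (by
        rw [ord_mul hw₂0 hw₁0, hw₁o, hw₂o]; ring)) (mul_ne_zero hw₂0 hw₁0)
      have p3 : Vge q (6 * t) (w₁ ^ 2) := vge_of_ord (le_of_eq (by rw [ord_pow hw₁0, hw₁o]; ring))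
        (pow_ne_zero 2 hw₁0)
      exact vge_neg (vge_mono (by omega) (vge_mul hB (vge_add (vge_add p1 p2) p3)))
    exact vge_add l1 l2
  set M := z₂ ^ 2 + z₂ * z₁ + z₁ ^ 2 + A * w₁ ^ 2 with hMdef
  clear_value M
  have hMU : μ * (z₂ - z₁) = w₂ - w₁ := div_mul_cancel₀ _ hz21
  have hUid : (w₂ - w₁) * U = (z₂ - z₁) * M := by
    rw [hUdef, hMdef]
    linear_combination f₂ - f₁
  clear_value μ U
  have hμU : μ * U = M := by
    apply mul_right_cancel₀ hz21
    calc μ * U * (z₂ - z₁) = μ * (z₂ - z₁) * U := by ring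
      _ = (w₂ - w₁) * U := by rw [hMU]
      _ = (z₂ - z₁) * M := hUid
      _ = M * (z₂ - z₁) := by ring
  have hμv : Vge q (2 * t) μ := by
    rcases eq_or_ne μ 0 with h0 | h0
    · rw [h0]; exact vge_zero _
    · have hM0 : M ≠ 0 := by rw [← hμU]; exact mul_ne_zero h0 hU.1
      have hMv : Vge q (2 * t) M := by
        rw [hMdef]
        have p1 : Vge q (2 * t) (z₂ ^ 2) := vge_of_ord (le_of_eq (by rw [ord_pow hz₂0, hz₂o]; ring))
          (pow_ne_zero 2 hz₂0)
        have p2 : Vge q (2 * t) (z₂ * z₁) := vge_of_ord (le_of_eq (by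
          rw [ord_mul hz₂0 hz₁0, hz₁o, hz₂o]; ring)) (mul_ne_zero hz₂0 hz₁0)
        have p3 : Vge q (2 * t) (z₁ ^ 2) := vge_of_ord (le_of_eq (by rw [ord_pow hz₁0, hz₁o]; ring))
          (pow_ne_zero 2 hz₁0)
        have p4 : Vge q (2 * t) (A * w₁ ^ 2) := vge_mono (d := 0 + 6 * t) (by omega) (vge_mul hA
          (vge_of_ord (le_of_eq (by rw [ord_pow hw₁0, hw₁o]; ring)) (pow_ne_zero 2 hw₁0)))
        exact vge_add (vge_add (vge_add p1 p2) p3) p4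
      have hord : ordAt q μ + ordAt q U = ordAt q M := by rw [← ord_mul h0 hU.1, hμU]
      rw [hU.2, ord_one] at hord
      refine vge_of_ord ?_ h0
      have := (vge_iff_ord hM0).mp hMv
      omega
  set ν := w₁ - μ * z₁ with hνdef
  clear_value ν
  have hνv : Vge q (3 * t) ν := by
    rw [hνdef, sub_eq_add_neg]
    exact vge_add (vge_of_ord (le_of_eq hw₁o.symm) hw₁0)
      (vge_neg (vge_mono (d := 2 * t + t) (by omega)
        (vge_mul hμv (vge_of_ord (le_of_eq hz₁o.symm) hz₁0))))
  have hxy12 : x₂ * y₁ - x₁ * y₂ ≠ 0 := by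
    intro h0
    apply hzne
    rw [hz₁def, hz₂def, div_eq_div_iff hy₁0 hy₂0]
    linear_combination -h0
  have hx21' : x₂ - x₁ ≠ 0 := sub_ne_zero.mpr fun h => hx12 h.symm
  have hz21' : x₂ / y₂ - x₁ / y₁ ≠ 0 := by
    rw [hz₁def, hz₂def] at hz21; exact hz21
  set νt := y₁ - L * x₁ with hνtdef
  clear_value νt
  have h1 : ν * (z₂ - z₁) = w₁ * (z₂ - z₁) - (w₂ - w₁) * z₁ := by
    rw [hνdef]
    linear_combination (-z₁) * hMU
  have h2 : x₂ * y₁ - x₁ * y₂ = y₁ * y₂ * (z₂ - z₁) := by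
    rw [hz₁def, hz₂def]
    field_simp
  have h4 : y₁ * y₂ * (w₁ * (z₂ - z₁) - (w₂ - w₁) * z₁) = x₂ - x₁ := by
    rw [hz₁def, hz₂def, hw₁def, hw₂def]
    field_simp
    ring
  have hν_lin : ν * (x₂ * y₁ - x₁ * y₂) = x₂ - x₁ := by
    linear_combination ν * h2 + (y₁ * y₂) * h1 + h4
  have hνt_lin : νt * (x₂ - x₁) = x₂ * y₁ - x₁ * y₂ := by
    rw [hνtdef, hLdef]
    field_simp
    ring
  have hprod : ν * νt = 1 := by
    apply mul_right_cancel₀ (mul_ne_zero hxy12 hx21')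
    linear_combination (νt * (x₂ - x₁)) * hν_lin + (x₂ - x₁) * hνt_lin
  have hν0 : ν ≠ 0 := left_ne_zero_of_mul_eq_one hprod
  have hνt0 : νt ≠ 0 := right_ne_zero_of_mul_eq_one hprod
  have hνto : ordAt q νt ≤ -(3 * t) := by
    have hsum := ord_mul (q := q) hν0 hνt0
    rw [hprod, ord_one] at hsum
    have := (vge_iff_ord hν0).mp hνv
    omega
  have hsum : L * (y₁ + y₂) = x₁ ^ 2 + x₁ * x₂ + x₂ ^ 2 + A := by
    apply mul_left_cancel₀ hx12'
    linear_combination (y₁ + y₂) * hL + e₁ - e₂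
  have hid : (L ^ 2 - x₁ - x₂) * (x₁ * x₂) = νt ^ 2 - B := by
    rw [hνtdef]
    linear_combination (-1 : K) * e₁ + x₁ * hsum - (x₁ * L) * hL
  have hνt2o : ordAt q (νt ^ 2) = 2 * ordAt q νt := ord_pow hνt0 2
  have hfin : νt ^ 2 - B ≠ 0 ∧ ordAt q (νt ^ 2 - B) = ordAt q (νt ^ 2) := by
    have hsplit : νt ^ 2 - B = νt ^ 2 + (-B) := by ring
    rw [hsplit]
    exact ord_add_dominant (pow_ne_zero 2 hνt0) (vge_neg (vge_mono (by omega) hB))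
  have hx30 : L ^ 2 - x₁ - x₂ ≠ 0 := by
    intro h0; rw [h0, zero_mul] at hid; exact hfin.1 hid.symm
  have hmm := ord_mul (q := q) hx30 (mul_ne_zero hx₁0 hx₂0)
  rw [hid, hfin.2, hνt2o, ord_mul hx₁0 hx₂0, hmx₁, hmx₂] at hmm
  omega

end OrdAux

namespace OrdAux

variable {K : Type*} [Field K] [NumberField K]

open WeierstrassCurve.Affine

/-- Membership in the kernel of reduction at `q` (the point at infinity, or `v_q(x) < 0`). -/
def inKer (q : HeightOneSpectrum (𝓞 K)) {W : WeierstrassCurve.Affine K} : W.Point → Prop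
  | WeierstrassCurve.Affine.Point.zero => True
  | @WeierstrassCurve.Affine.Point.some _ _ _ x _ _ => ordAt q x < 0

lemma inKer_zero {q : HeightOneSpectrum (𝓞 K)} {W : WeierstrassCurve.Affine K} :
    inKer q (0 : W.Point) := trivial

lemma inKer_neg {q : HeightOneSpectrum (𝓞 K)} {W : WeierstrassCurve.Affine K} {P : W.Point}
    (hP : inKer q P) : inKer q (-P) := by
  cases P with
  | zero => exact trivial
  | @some x y h => exact hP

open scoped Classical in
lemma inKer_add {q : HeightOneSpectrum (𝓞 K)} {W : WeierstrassCurve.Affine K} {A B : 𝓞 K}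
    (hW1 : W.a₁ = 0) (hW2 : W.a₂ = 0) (hW3 : W.a₃ = 0)
    (hW4 : W.a₄ = algebraMap (𝓞 K) K A) (hW6 : W.a₆ = algebraMap (𝓞 K) K B)
    {P Q : W.Point} (hP : inKer q P) (hQ : inKer q Q) : inKer q (P + Q) := by
  have hnegY : ∀ x y : K, W.negY x y = -y := by
    intro x y; rw [WeierstrassCurve.Affine.negY, hW1, hW3]; ring
  have hA : Vge q 0 (algebraMap (𝓞 K) K A) := vge_algebraMap A
  have hB : Vge q 0 (algebraMap (𝓞 K) K B) := vge_algebraMap B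
  cases P with
  | zero => rw [← WeierstrassCurve.Affine.Point.zero_def, zero_add]; exact hQ
  | @some x₁ y₁ h₁ =>
    cases Q with
    | zero => rw [← WeierstrassCurve.Affine.Point.zero_def, add_zero]; exact hP
    | @some x₂ y₂ h₂ =>
      have e₁ : y₁ ^ 2 = x₁ ^ 3 + algebraMap (𝓞 K) K A * x₁ + algebraMap (𝓞 K) K B := by
        have h := (W.equation_iff x₁ y₁).mp h₁.left
        rw [hW1, hW2, hW3, hW4, hW6] at h
        linear_combination h
      have e₂ : y₂ ^ 2 = x₂ ^ 3 + algebraMap (𝓞 K) K A * x₂ + algebraMap (𝓞 K) K B := by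
        have h := (W.equation_iff x₂ y₂).mp h₂.left
        rw [hW1, hW2, hW3, hW4, hW6] at h
        linear_combination h
      have hx₁ord : ordAt q x₁ < 0 := hP
      have hx₂ord : ordAt q x₂ < 0 := hQ
      by_cases hzero : x₁ = x₂ ∧ y₁ = W.negY x₂ y₂
      · rw [WeierstrassCurve.Affine.Point.add_of_Y_eq hzero.1 hzero.2]; exact trivial
      · have himp : x₁ = x₂ → y₁ ≠ W.negY x₂ y₂ := fun hx hy => hzero ⟨hx, hy⟩
        rw [WeierstrassCurve.Affine.Point.add_some hzero]
        show ordAt q (W.addX x₁ x₂ (W.slope x₁ x₂ y₁ y₂)) < 0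
        have haddX : W.addX x₁ x₂ (W.slope x₁ x₂ y₁ y₂)
            = (W.slope x₁ x₂ y₁ y₂) ^ 2 - x₁ - x₂ := by
          rw [WeierstrassCurve.Affine.addX, hW1, hW2]; ring
        rw [haddX]
        set L := W.slope x₁ x₂ y₁ y₂ with hLdef0
        obtain ⟨t₁, ht₁, hx₁0, hy₁0, hmx₁, hmy₁⟩ := kernel_aux hA hB e₁ hx₁ord
        obtain ⟨t₂, ht₂, hx₂0, hy₂0, hmx₂, hmy₂⟩ := kernel_aux hA hB e₂ hx₂ord
        by_cases hx : x₁ = x₂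
        · -- tangent case
          have hy' : y₁ ≠ W.negY x₂ y₂ := himp hx
          have hLdef : L = (3 * x₁ ^ 2 + algebraMap (𝓞 K) K A) / (2 * y₁) := by
            rw [hLdef0, WeierstrassCurve.Affine.slope_of_Y_ne hx hy', hnegY, hW1, hW2, hW4]
            ring_nf
          have hres := core_tangent hA hB e₁ hx₁ord hLdef
          rw [show L ^ 2 - x₁ - x₂ = L ^ 2 - x₁ - x₁ by rw [hx]]
          exact hres
        · -- chord case
          have hLdef : L = (y₁ - y₂) / (x₁ - x₂) := by
            rw [hLdef0, WeierstrassCurve.Affine.slope_of_X_ne hx]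
          have hx12' : x₁ - x₂ ≠ 0 := sub_ne_zero.mpr hx
          have hL : L * (x₁ - x₂) = y₁ - y₂ := by rw [hLdef]; field_simp
          rcases lt_trichotomy t₁ t₂ with h | h | h
          · exact core_chord_lt hA hB e₁ e₂ hx₁0 hy₁0 hx₂0 hy₂0 hmx₁ hmy₁ hmx₂ hmy₂ ht₁ h hL
          · subst h
            exact core_chord_eq hA hB e₁ e₂ hx₁0 hy₁0 hx₂0 hy₂0 hmx₁ hmy₁ hmx₂ hmy₂ ht₁ hx hLdef
          · have hL' : L * (x₂ - x₁) = y₂ - y₁ := by linear_combination -hL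
            have hres := core_chord_lt hA hB e₂ e₁ hx₂0 hy₂0 hx₁0 hy₁0 hmx₂ hmy₂ hmx₁ hmy₁ ht₂ h hL'
            rw [show L ^ 2 - x₁ - x₂ = L ^ 2 - x₂ - x₁ by ring]
            exact hres

end OrdAux

open scoped Classical in
theorem stmt_7
    (K : Type) [Field K] [NumberField K]
    (a b : 𝓞 K)
    (W : WeierstrassCurve.Affine K)
    (hW : W = { a₁ := 0, a₂ := 0, a₃ := 0, a₄ := algebraMap (𝓞 K) K a,
                a₆ := algebraMap (𝓞 K) K b })
    (P : W.Point) (hP : ¬ IsOfFinAddOrder P)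
    (x y : ℤ → K)
    (hxy : ∀ n : ℤ, n ≠ 0 → ∃ h : W.Nonsingular (x n) (y n),
      n • P = WeierstrassCurve.Affine.Point.some (x n) (y n) h)
    (Sbad : Set (HeightOneSpectrum (𝓞 K)))
    (hSbadFin : Sbad.Finite)
    (hSbadRam : ∀ q : HeightOneSpectrum (𝓞 K),
      (∃ p : ℕ, p.Prime ∧ q.asIdeal ^ 2 ∣ Ideal.span {(p : 𝓞 K)}) → q ∈ Sbad)
    (hSbad2 : ∀ q : HeightOneSpectrum (𝓞 K), (2 : 𝓞 K) ∈ q.asIdeal → q ∈ Sbad)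
    (hSbadSing : ∀ q : HeightOneSpectrum (𝓞 K),
      (-16 * (4 * a ^ 3 + 27 * b ^ 2) : 𝓞 K) ∈ q.asIdeal → q ∈ Sbad)
    (hSbadP : ∀ q : HeightOneSpectrum (𝓞 K),
      (ordAt q (x 1) < 0 ∨ ordAt q (y 1) < 0) → q ∈ Sbad)
    (S : ℤ → Set (HeightOneSpectrum (𝓞 K)))
    (hS : ∀ n : ℤ, n ≠ 0 →
      S n = {q : HeightOneSpectrum (𝓞 K) | q ∉ Sbad ∧ ordAt q (x n) < 0})
    (hPrim : ∀ ℓ : ℕ, ℓ.Prime → ∀ j : ℕ, 1 ≤ j →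
      ((S ((ℓ : ℤ) ^ j)) \ (S ((ℓ : ℤ) ^ (j - 1)))).Nonempty)
    :
    (∀ k n : ℤ, 1 ≤ k → 1 ≤ n → (S k ⊆ S n ↔ k ∣ n)) ∧
      (∀ n₁ n₂ : ℤ, 1 ≤ n₁ → 1 ≤ n₂ → S n₁ = S n₂ → n₁ = n₂) := by
  classical
  have hW1 : W.a₁ = 0 := by rw [hW]
  have hW2 : W.a₂ = 0 := by rw [hW]
  have hW3 : W.a₃ = 0 := by rw [hW]
  have hW4 : W.a₄ = algebraMap (𝓞 K) K a := by rw [hW]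
  have hW6 : W.a₆ = algebraMap (𝓞 K) K b := by rw [hW]
  -- the subgroup of `n` with `n • P` in the kernel of reduction at `q`
  set Tq : HeightOneSpectrum (𝓞 K) → AddSubgroup ℤ := fun q =>
    { carrier := {n : ℤ | OrdAux.inKer q (n • P)}
      zero_mem' := by
        simp only [Set.mem_setOf_eq, zero_zsmul]
        exact OrdAux.inKer_zero
      add_mem' := by
        intro m n hm hn
        simp only [Set.mem_setOf_eq] at *
        rw [add_zsmul]
        exact OrdAux.inKer_add hW1 hW2 hW3 hW4 hW6 hm hn
      neg_mem' := by
        intro n hn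
        simp only [Set.mem_setOf_eq] at *
        rw [neg_zsmul]
        exact OrdAux.inKer_neg hn } with hTqdef
  have hmemT : ∀ (q : HeightOneSpectrum (𝓞 K)) (n : ℤ), n ≠ 0 →
      ((n ∈ Tq q) ↔ ordAt q (x n) < 0) := by
    intro q n hn0
    obtain ⟨h, hn⟩ := hxy n hn0
    constructor
    · intro hmem
      have hK : OrdAux.inKer q (n • P) := hmem
      rw [hn] at hK
      exact hK
    · intro hlt
      show OrdAux.inKer q (n • P)
      rw [hn]
      exact hlt
  have hdvdT : ∀ (q : HeightOneSpectrum (𝓞 K)) (m n : ℤ), m ∣ n → m ∈ Tq q → n ∈ Tq q := by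
    rintro q m n ⟨c, rfl⟩ hm
    simpa [mul_comm] using AddSubgroup.zsmul_mem _ hm c
  have hgcdT : ∀ (q : HeightOneSpectrum (𝓞 K)) (m n : ℤ), m ∈ Tq q → n ∈ Tq q →
      ((Int.gcd m n : ℕ) : ℤ) ∈ Tq q := by
    intro q m n hm hn
    rw [Int.gcd_eq_gcd_ab m n]
    exact add_mem (by simpa [mul_comm] using AddSubgroup.zsmul_mem _ hm (m.gcdA n))
      (by simpa [mul_comm] using AddSubgroup.zsmul_mem _ hn (m.gcdB n))
  have hbridge : ∀ (q : HeightOneSpectrum (𝓞 K)) (n : ℤ), 1 ≤ n →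
      (q ∈ S n ↔ (q ∉ Sbad ∧ n ∈ Tq q)) := by
    intro q n hn
    have hn0 : n ≠ 0 := by omega
    rw [hS n hn0]
    simp only [Set.mem_setOf_eq]
    rw [hmemT q n hn0]
  have main : ∀ k n : ℤ, 1 ≤ k → 1 ≤ n → (S k ⊆ S n ↔ k ∣ n) := by
    intro k n hk hn
    constructor
    · intro hsub
      by_contra hndvd
      set K' := k.toNat with hK'
      set N' := n.toNat with hN'
      have hkK : (K' : ℤ) = k := Int.toNat_of_nonneg (by omega)
      have hnN : (N' : ℤ) = n := Int.toNat_of_nonneg (by omega)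
      have hK0 : K' ≠ 0 := by omega
      have hN0 : N' ≠ 0 := by omega
      have hndvd' : ¬ (K' ∣ N') := by
        intro hd
        exact hndvd (by rw [← hkK, ← hnN]; exact_mod_cast hd)
      obtain ⟨ℓ, hℓ⟩ : ∃ ℓ, N'.factorization ℓ < K'.factorization ℓ := by
        by_contra hc
        push_neg at hc
        exact hndvd' ((Nat.factorization_le_iff_dvd hK0 hN0).mp fun p => hc p)
      have hlp : ℓ.Prime := by
        by_contra hnp
        rw [Nat.factorization_eq_zero_of_not_prime K' hnp] at hℓ
        omega
      set j := K'.factorization ℓ with hj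
      have hj1 : 1 ≤ j := by omega
      obtain ⟨q, hq1, hq2⟩ := hPrim ℓ hlp j hj1
      have hlpos : (0:ℤ) < (ℓ:ℤ) := by exact_mod_cast hlp.pos
      have hl1 : (1:ℤ) ≤ (ℓ:ℤ) := by omega
      have hpow_pos : (1:ℤ) ≤ (ℓ:ℤ) ^ j := one_le_pow₀ hl1
      obtain ⟨hqSbad, hTj⟩ := (hbridge q _ hpow_pos).mp hq1
      have hdk : ((ℓ:ℤ) ^ j) ∣ k := by
        rw [← hkK]
        have h := Nat.ordProj_dvd K' ℓ
        rw [← hj] at h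
        exact_mod_cast h
      have hTk : k ∈ Tq q := hdvdT q _ _ hdk hTj
      have hqSk : q ∈ S k := (hbridge q k hk).mpr ⟨hqSbad, hTk⟩
      have hTn : n ∈ Tq q := ((hbridge q n hn).mp (hsub hqSk)).2
      set g := Int.gcd ((ℓ:ℤ) ^ j) n with hg
      have hTg : ((g : ℕ) : ℤ) ∈ Tq q := hgcdT q _ _ hTj hTn
      have hgl : g ∣ ℓ ^ j := by
        have h : ((g : ℕ) : ℤ) ∣ (ℓ:ℤ) ^ j := hg ▸ Int.gcd_dvd_left _ _
        exact_mod_cast h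
      obtain ⟨c, hcj, hgc⟩ := (Nat.dvd_prime_pow hlp).mp hgl
      have hgn : (g : ℤ) ∣ n := by
        exact hg ▸ Int.gcd_dvd_right _ _
      have hcN : ℓ ^ c ∣ N' := by
        have h1 : (g : ℤ) ∣ (N' : ℤ) := by rw [hnN]; exact hgn
        have h2 : g ∣ N' := by exact_mod_cast h1
        rwa [hgc] at h2
      have hcle : c ≤ N'.factorization ℓ := (Nat.Prime.pow_dvd_iff_le_factorization hlp hN0).mp hcN
      have hcj1 : c ≤ j - 1 := by omega
      have hgdvd : (g : ℤ) ∣ (ℓ:ℤ) ^ (j - 1) := by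
        rw [hgc]
        have h := pow_dvd_pow ℓ hcj1
        exact_mod_cast h
      have hTj1 : ((ℓ:ℤ) ^ (j - 1)) ∈ Tq q := hdvdT q _ _ hgdvd hTg
      rcases Nat.eq_or_lt_of_le hj1 with hjeq | hjlt
      · have hj0 : j - 1 = 0 := by omega
        rw [hj0, pow_zero] at hTj1
        have h1 : ordAt q (x 1) < 0 := (hmemT q 1 one_ne_zero).mp hTj1
        exact hqSbad (hSbadP q (Or.inl h1))
      · have hpow_pos' : (1:ℤ) ≤ (ℓ:ℤ) ^ (j - 1) := one_le_pow₀ hl1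
        exact hq2 ((hbridge q _ hpow_pos').mpr ⟨hqSbad, hTj1⟩)
    · intro hdvd q hq
      obtain ⟨hqSbad, hTk⟩ := (hbridge q k hk).mp hq
      exact (hbridge q n hn).mpr ⟨hqSbad, hdvdT q _ _ hdvd hTk⟩
  refine ⟨main, ?_⟩
  intro n₁ n₂ h1 h2 heq
  have d1 : n₁ ∣ n₂ := (main n₁ n₂ h1 h2).mp (by rw [heq])
  have d2 : n₂ ∣ n₁ := (main n₂ n₁ h2 h1).mp (by rw [heq])
  exact Int.dvd_antisymm (by omega) (by omega) d1 d2
end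

section
/- Assume the primitive divisor hypothesis. Then for all integers k, n ≥ 1: gcd(k, n) = 1 if and only if S_k ∩ S_n = ∅. -/
open IsDedekindDomain IsDedekindDomain.HeightOneSpectrum NumberField WeierstrassCurve Filter

open scoped Multiplicative

local notation "ℤₘ₀" => WithZero (Multiplicative ℤ)

namespace Stmt8Aux

noncomputable def ee (n : ℤ) : ℤₘ₀ := ((Multiplicative.ofAdd n : Multiplicative ℤ) : ℤₘ₀)

lemma ee_ne_zero (n : ℤ) : ee n ≠ 0 := WithZero.coe_ne_zero

lemma ee_mul (m n : ℤ) : ee m * ee n = ee (m + n) := by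
  simp [ee, ← WithZero.coe_mul, ← ofAdd_add]

lemma ee_le_ee {m n : ℤ} : ee m ≤ ee n ↔ m ≤ n := by
  simp [ee, WithZero.coe_le_coe, Multiplicative.ofAdd_le]

lemma ee_lt_ee {m n : ℤ} : ee m < ee n ↔ m < n := by
  simp [ee, WithZero.coe_lt_coe, Multiplicative.ofAdd_lt]

lemma ee_inj {m n : ℤ} (h : ee m = ee n) : m = n :=
  le_antisymm (ee_le_ee.mp h.le) (ee_le_ee.mp h.ge)

lemma ee_zero : ee 0 = 1 := rfl

lemma one_lt_ee {n : ℤ} : 1 < ee n ↔ 0 < n := by rw [← ee_zero, ee_lt_ee]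

lemma one_le_ee {n : ℤ} : 1 ≤ ee n ↔ 0 ≤ n := by rw [← ee_zero, ee_le_ee]

lemma ee_le_one {n : ℤ} : ee n ≤ 1 ↔ n ≤ 0 := by rw [← ee_zero, ee_le_ee]

lemma ee_pow (k : ℕ) (n : ℤ) : ee n ^ k = ee (k * n) := by
  induction k with
  | zero => simp [ee_zero]
  | succ k ih => rw [pow_succ, ih, ee_mul]; congr 1; push_cast; ring

lemma exists_ee {K : Type*} [Field K] (V : Valuation K ℤₘ₀) {z : K} (hz : z ≠ 0) :
    ∃ n : ℤ, V z = ee n := by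
  refine ⟨Multiplicative.toAdd (WithZero.unzero (V.ne_zero_iff.mpr hz)), ?_⟩
  rw [ee, ofAdd_toAdd, WithZero.coe_unzero]

lemma ordAt_lt_zero_iff {K : Type*} [Field K] [NumberField K]
    (q : HeightOneSpectrum (𝓞 K)) (z : K) : ordAt q z < 0 ↔ 1 < q.valuation K z := by
  unfold ordAt
  split_ifs with hz
  · subst hz
    simp only [lt_self_iff_false, false_iff, map_zero]
    exact fun h => absurd h (by simp)
  · set u := WithZero.unzero ((q.valuation K).ne_zero_iff.mpr hz) with hu
    have h1 : q.valuation K z = (u : ℤₘ₀) := (WithZero.coe_unzero _).symm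
    rw [h1, show (1 : ℤₘ₀) = ((1 : Multiplicative ℤ) : ℤₘ₀) from rfl, WithZero.coe_lt_coe,
      show (1 : Multiplicative ℤ) = Multiplicative.ofAdd 0 from rfl,
      ← ofAdd_toAdd u, Multiplicative.ofAdd_lt, toAdd_ofAdd]
    omega

end Stmt8Aux

namespace Stmt8Aux

variable {K : Type*} [Field K]

lemma curve_val (V : Valuation K ℤₘ₀) {aa bb x y : K}
    (ha : V aa ≤ 1) (hb : V bb ≤ 1) (hE : y ^ 2 = x ^ 3 + aa * x + bb) (hx : 1 < V x) :
    ∃ s : ℤ, 1 ≤ s ∧ V x = ee (2 * s) ∧ V y = ee (3 * s) := by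
  have hx0 : x ≠ 0 := by rintro rfl; simp at hx
  obtain ⟨n, hn⟩ := exists_ee V hx0
  have hn0 : 0 < n := one_lt_ee.mp (hn ▸ hx)
  have h3 : V (x ^ 3) = ee (3 * n) := by rw [map_pow, hn, ee_pow]; norm_num
  have hax : V (aa * x + bb) < V (x ^ 3) := by
    rw [h3]
    have hb1 : V (aa * x + bb) ≤ ee n := by
      refine Valuation.map_add_le _ ?_ ?_
      · rw [map_mul, hn]
        calc V aa * ee n ≤ 1 * ee n := mul_le_mul_left ha _
          _ = ee n := one_mul _
      · exact hb.trans (one_le_ee.mpr hn0.le)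
    exact lt_of_le_of_lt hb1 (ee_lt_ee.mpr (by omega))
  have hy2 : V (y ^ 2) = ee (3 * n) := by
    rw [hE, show x ^ 3 + aa * x + bb = x ^ 3 + (aa * x + bb) by ring,
      Valuation.map_add_eq_of_lt_left _ hax, h3]
  have hy0 : y ≠ 0 := by
    rintro rfl
    rw [show ((0 : K) ^ 2 : K) = 0 by ring, map_zero] at hy2
    exact ee_ne_zero _ hy2.symm
  obtain ⟨m, hm⟩ := exists_ee V hy0
  have h2m : ee (2 * m) = ee (3 * n) := by
    rw [← hy2, map_pow, hm, ee_pow]; norm_num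
  have h23 : 2 * m = 3 * n := ee_inj h2m
  refine ⟨m - n, by omega, ?_, ?_⟩
  · rw [hn]; congr 1; omega
  · rw [hm]; congr 1; omega

lemma double_val (V : Valuation K ℤₘ₀) {aa bb x y x₃ : K}
    (ha : V aa ≤ 1) (hb : V bb ≤ 1) (h2 : V 2 ≤ 1)
    (hE : y ^ 2 = x ^ 3 + aa * x + bb) (hx : 1 < V x) (hy : y ≠ 0)
    (hchar : (2 : K) ≠ 0)
    (hx3 : x₃ = ((3 * x ^ 2 + aa) / (2 * y)) ^ 2 - x - x) : 1 < V x₃ := by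
  obtain ⟨s, hs1, hvx, hvy⟩ := curve_val V ha hb hE hx
  have h2y : (2 : K) * y ≠ 0 := mul_ne_zero hchar hy
  have hL : (3 * x ^ 2 + aa) / (2 * y) * (2 * y) = 3 * x ^ 2 + aa := div_mul_cancel₀ _ h2y
  have hid : x₃ * (4 * y ^ 2) =
      x ^ 4 - (2 * aa * x ^ 2 + 8 * bb * x - aa ^ 2) := by
    rw [hx3]
    linear_combination ((3 * x ^ 2 + aa) / (2 * y) * 2 * y + 3 * x ^ 2 + aa) * hL +
      (-8 * x) * hE
  have h4 : V (4 : K) ≤ 1 := by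
    rw [show (4 : K) = 2 * 2 by norm_num, map_mul]
    exact mul_le_one' h2 h2
  have h8 : V (8 : K) ≤ 1 := by
    rw [show (8 : K) = 2 * (2 * 2) by norm_num, map_mul, map_mul]
    exact mul_le_one' h2 (mul_le_one' h2 h2)
  have hx4 : V (x ^ 4) = ee (8 * s) := by rw [map_pow, hvx, ee_pow]; congr 1; ring
  have hrest : V (2 * aa * x ^ 2 + 8 * bb * x - aa ^ 2) ≤ ee (4 * s) := by
    refine Valuation.map_sub_le _ (Valuation.map_add_le _ ?_ ?_) ?_
    · rw [map_mul, map_mul, map_pow, hvx, ee_pow]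
      calc V 2 * V aa * ee (2 * (2 * s)) ≤ 1 * 1 * ee (2 * (2 * s)) :=
            mul_le_mul' (mul_le_mul' h2 ha) le_rfl
        _ = ee (2 * (2 * s)) := by rw [one_mul, one_mul]
        _ ≤ ee (4 * s) := ee_le_ee.mpr (by omega)
    · rw [map_mul, map_mul, hvx]
      calc V 8 * V bb * ee (2 * s) ≤ 1 * 1 * ee (2 * s) :=
            mul_le_mul' (mul_le_mul' h8 hb) le_rfl
        _ = ee (2 * s) := by rw [one_mul, one_mul]
        _ ≤ ee (4 * s) := ee_le_ee.mpr (by omega)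
    · rw [map_pow]
      calc V aa ^ 2 ≤ 1 ^ 2 := pow_le_pow_left' ha 2
        _ = 1 := one_pow 2
        _ ≤ ee (4 * s) := one_le_ee.mpr (by omega)
  have hN : V (x ^ 4 - (2 * aa * x ^ 2 + 8 * bb * x - aa ^ 2)) = ee (8 * s) := by
    have hlt : V (2 * aa * x ^ 2 + 8 * bb * x - aa ^ 2) < V (x ^ 4) := by
      rw [hx4]; exact lt_of_le_of_lt hrest (ee_lt_ee.mpr (by omega))
    rw [Valuation.map_sub_eq_of_lt_left _ hlt, hx4]
  have hD : V (4 * y ^ 2) ≤ ee (6 * s) := by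
    rw [map_mul, map_pow, hvy, ee_pow]
    calc V 4 * ee (2 * (3 * s)) ≤ 1 * ee (2 * (3 * s)) := mul_le_mul_left h4 _
      _ = ee (2 * (3 * s)) := one_mul _
      _ ≤ ee (6 * s) := ee_le_ee.mpr (by omega)
  by_contra hcon
  push_neg at hcon
  have : ee (8 * s) = V x₃ * V (4 * y ^ 2) := by rw [← map_mul, hid, hN]
  have hle : ee (8 * s) ≤ ee (6 * s) := by
    rw [this]
    calc V x₃ * V (4 * y ^ 2) ≤ 1 * ee (6 * s) := mul_le_mul' hcon hD
      _ = ee (6 * s) := one_mul _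
  exact absurd (ee_le_ee.mp hle) (by omega)

lemma chord_val (V : Valuation K ℤₘ₀) {aa bb x₁ y₁ x₂ y₂ x₃ : K}
    (ha : V aa ≤ 1) (hb : V bb ≤ 1) (h2 : V 2 ≤ 1)
    (hE₁ : y₁ ^ 2 = x₁ ^ 3 + aa * x₁ + bb) (hE₂ : y₂ ^ 2 = x₂ ^ 3 + aa * x₂ + bb)
    (hx₁ : 1 < V x₁) (hx₂ : 1 < V x₂) (hxne : x₁ ≠ x₂)
    (hx3 : x₃ = ((y₁ - y₂) / (x₁ - x₂)) ^ 2 - x₁ - x₂) : 1 < V x₃ := by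
  obtain ⟨s₁, hs₁, hvx₁, hvy₁⟩ := curve_val V ha hb hE₁ hx₁
  obtain ⟨s₂, hs₂, hvx₂, hvy₂⟩ := curve_val V ha hb hE₂ hx₂
  have hd : x₁ - x₂ ≠ 0 := sub_ne_zero.mpr hxne
  have hL : (y₁ - y₂) / (x₁ - x₂) * (x₁ - x₂) = y₁ - y₂ := div_mul_cancel₀ _ hd
  set A : K := x₁ * x₂ * (x₁ + x₂) + aa * (x₁ + x₂) + 2 * bb with hA
  set B : K := 2 * (y₁ * y₂) with hB
  have hid1 : x₃ * (x₁ - x₂) ^ 2 = A - B := by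
    rw [hx3, hA, hB]
    linear_combination ((y₁ - y₂) / (x₁ - x₂) * (x₁ - x₂) + y₁ - y₂) * hL + hE₁ + hE₂
  have hid2 : (A - B) * (A + B) =
      ((x₁ * x₂ - aa) ^ 2 - 4 * (bb * (x₁ + x₂))) * (x₁ - x₂) ^ 2 := by
    rw [hA, hB]
    linear_combination (-4 * (x₂ ^ 3 + aa * x₂ + bb)) * hE₁ + (-4 * y₁ ^ 2) * hE₂
  have h4 : V (4 : K) ≤ 1 := by
    rw [show (4 : K) = 2 * 2 by norm_num, map_mul]
    exact mul_le_one' h2 h2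
  set M : ℤ := max s₁ s₂ with hM
  have hM1 : s₁ ≤ M := le_max_left _ _
  have hM2 : s₂ ≤ M := le_max_right _ _
  have hM3 : M = s₁ ∨ M = s₂ := max_choice s₁ s₂
  have hsum : V (x₁ + x₂) ≤ ee (2 * M) := by
    refine Valuation.map_add_le _ ?_ ?_
    · rw [hvx₁]; exact ee_le_ee.mpr (by omega)
    · rw [hvx₂]; exact ee_le_ee.mpr (by omega)
  -- value of C
  have hx12 : V (x₁ * x₂) = ee (2 * s₁ + 2 * s₂) := by
    rw [map_mul, hvx₁, hvx₂, ee_mul]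
  have hCa : V (x₁ * x₂ - aa) = ee (2 * s₁ + 2 * s₂) := by
    have : V aa < V (x₁ * x₂) := by
      rw [hx12]; exact lt_of_le_of_lt ha (one_lt_ee.mpr (by omega))
    rw [Valuation.map_sub_eq_of_lt_left _ this, hx12]
  have hC : V ((x₁ * x₂ - aa) ^ 2 - 4 * (bb * (x₁ + x₂))) = ee (4 * s₁ + 4 * s₂) := by
    have h1 : V ((x₁ * x₂ - aa) ^ 2) = ee (4 * s₁ + 4 * s₂) := by
      rw [map_pow, hCa, ee_pow]; congr 1; ring
    have h2' : V (4 * (bb * (x₁ + x₂))) < V ((x₁ * x₂ - aa) ^ 2) := by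
      rw [h1, map_mul, map_mul]
      calc V 4 * (V bb * V (x₁ + x₂)) ≤ 1 * (1 * ee (2 * M)) :=
            mul_le_mul' h4 (mul_le_mul' hb hsum)
        _ = ee (2 * M) := by rw [one_mul, one_mul]
        _ < ee (4 * s₁ + 4 * s₂) := ee_lt_ee.mpr (by omega)
    rw [Valuation.map_sub_eq_of_lt_left _ h2', h1]
  have hABle : V (A + B) ≤ ee (2 * s₁ + 2 * s₂ + 2 * M) := by
    rw [hA, hB]
    refine Valuation.map_add_le _ (Valuation.map_add_le _ (Valuation.map_add_le _ ?_ ?_) ?_) ?_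
    · rw [map_mul, hx12]
      calc ee (2 * s₁ + 2 * s₂) * V (x₁ + x₂) ≤ ee (2 * s₁ + 2 * s₂) * ee (2 * M) :=
            mul_le_mul_right hsum _
        _ = ee (2 * s₁ + 2 * s₂ + 2 * M) := ee_mul _ _
    · rw [map_mul]
      calc V aa * V (x₁ + x₂) ≤ 1 * ee (2 * M) := mul_le_mul' ha hsum
        _ = ee (2 * M) := one_mul _
        _ ≤ ee (2 * s₁ + 2 * s₂ + 2 * M) := ee_le_ee.mpr (by omega)
    · rw [map_mul]
      calc V 2 * V bb ≤ 1 * 1 := mul_le_mul' h2 hb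
        _ = 1 := one_mul 1
        _ ≤ ee (2 * s₁ + 2 * s₂ + 2 * M) := one_le_ee.mpr (by omega)
    · rw [map_mul, map_mul, hvy₁, hvy₂]
      calc V 2 * (ee (3 * s₁) * ee (3 * s₂)) ≤ 1 * (ee (3 * s₁) * ee (3 * s₂)) :=
            mul_le_mul_left h2 _
        _ = ee (3 * s₁ + 3 * s₂) := by rw [one_mul, ee_mul]
        _ ≤ ee (2 * s₁ + 2 * s₂ + 2 * M) := ee_le_ee.mpr (by omega)
  have hdv : V ((x₁ - x₂) ^ 2) ≠ 0 := by
    simp only [ne_eq, Valuation.zero_iff, pow_eq_zero_iff, two_ne_zero]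
    exact fun h => hd (by simpa using h)
  by_contra hcon
  push_neg at hcon
  have e1 : V x₃ * V ((x₁ - x₂) ^ 2) = V (A - B) := by rw [← map_mul, hid1]
  have e2 : V (A - B) * V (A + B) = ee (4 * s₁ + 4 * s₂) * V ((x₁ - x₂) ^ 2) := by
    rw [← map_mul, hid2, map_mul, hC]
  have e3 : V x₃ * V ((x₁ - x₂) ^ 2) * V (A + B) =
      ee (4 * s₁ + 4 * s₂) * V ((x₁ - x₂) ^ 2) := by
    rw [e1, e2]
  rw [mul_right_comm] at e3
  have e4 : V x₃ * V (A + B) = ee (4 * s₁ + 4 * s₂) := mul_right_cancel₀ hdv e3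
  have hle : ee (4 * s₁ + 4 * s₂) ≤ ee (2 * s₁ + 2 * s₂ + 2 * M) := by
    rw [← e4]
    calc V x₃ * V (A + B) ≤ 1 * ee (2 * s₁ + 2 * s₂ + 2 * M) := mul_le_mul' hcon hABle
      _ = ee (2 * s₁ + 2 * s₂ + 2 * M) := one_mul _
  have := ee_le_ee.mp hle
  omega

section Group

variable {p : ℤ → Prop}

/-- The auxiliary subgroup of multiples. -/
def mkG (p : ℤ → Prop)
    (hadd : ∀ m₁ m₂ : ℤ, m₁ ≠ 0 → m₂ ≠ 0 → m₁ + m₂ ≠ 0 → p m₁ → p m₂ → p (m₁ + m₂))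
    (hneg : ∀ m : ℤ, m ≠ 0 → p m → p (-m)) : AddSubgroup ℤ where
  carrier := {m : ℤ | m = 0 ∨ p m}
  zero_mem' := Or.inl rfl
  add_mem' := by
    intro m₁ m₂ h1 h2
    rcases h1 with h1 | h1
    · subst h1; simpa using h2
    rcases h2 with h2 | h2
    · subst h2; simpa using Or.inr h1
    by_cases hm1 : m₁ = 0
    · subst hm1; simpa using Or.inr h2
    by_cases hm2 : m₂ = 0
    · subst hm2; simpa using Or.inr h1
    by_cases hmm : m₁ + m₂ = 0
    · exact Or.inl hmm
    · exact Or.inr (hadd m₁ m₂ hm1 hm2 hmm h1 h2)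
  neg_mem' := by
    intro m hm
    by_cases hm0 : m = 0
    · subst hm0; exact Or.inl neg_zero
    rcases hm with hm | hm
    · exact Or.inl (by rw [hm, neg_zero])
    · exact Or.inr (hneg m hm0 hm)

lemma mem_mkG {hadd : ∀ m₁ m₂ : ℤ, m₁ ≠ 0 → m₂ ≠ 0 → m₁ + m₂ ≠ 0 → p m₁ → p m₂ → p (m₁ + m₂)}
    {hneg : ∀ m : ℤ, m ≠ 0 → p m → p (-m)} {m : ℤ} :
    m ∈ mkG p hadd hneg ↔ m = 0 ∨ p m := Iff.rfl

lemma gcd_prop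
    (hadd : ∀ m₁ m₂ : ℤ, m₁ ≠ 0 → m₂ ≠ 0 → m₁ + m₂ ≠ 0 → p m₁ → p m₂ → p (m₁ + m₂))
    (hneg : ∀ m : ℤ, m ≠ 0 → p m → p (-m))
    {k n : ℤ} (hk : k ≠ 0) (hpk : p k) (hpn : p n) :
    p (Int.gcd k n : ℤ) := by
  set G := mkG p hadd hneg with hG
  have hkG : k ∈ G := mem_mkG.mpr (Or.inr hpk)
  have hnG : n ∈ G := mem_mkG.mpr (Or.inr hpn)
  have hgG : (Int.gcd k n : ℤ) ∈ G := by
    rw [Int.gcd_eq_gcd_ab]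
    exact add_mem (by simpa [smul_eq_mul, mul_comm] using G.zsmul_mem hkG (Int.gcdA k n))
      (by simpa [smul_eq_mul, mul_comm] using G.zsmul_mem hnG (Int.gcdB k n))
  rcases mem_mkG.mp hgG with h | h
  · exact absurd (Int.gcd_eq_zero_iff.mp (by exact_mod_cast h)).1 hk
  · exact h

lemma mul_prop
    (hadd : ∀ m₁ m₂ : ℤ, m₁ ≠ 0 → m₂ ≠ 0 → m₁ + m₂ ≠ 0 → p m₁ → p m₂ → p (m₁ + m₂))
    (hneg : ∀ m : ℤ, m ≠ 0 → p m → p (-m))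
    {l c : ℤ} (hlc : l * c ≠ 0) (hp : p l) : p (l * c) := by
  set G := mkG p hadd hneg with hG
  have hl : l ≠ 0 := fun h => hlc (by rw [h, zero_mul])
  have hlG : l ∈ G := mem_mkG.mpr (Or.inr hp)
  have : l * c ∈ G := by
    rw [mul_comm]
    simpa [smul_eq_mul] using G.zsmul_mem hlG c
  rcases mem_mkG.mp this with h | h
  · exact absurd h hlc
  · exact h

end Group

end Stmt8Aux

open Stmt8Aux

open scoped Classical in
theorem stmt_8
    (K : Type) [Field K] [NumberField K]
    (a b : 𝓞 K)
    (W : WeierstrassCurve.Affine K)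
    (hW : W = { a₁ := 0, a₂ := 0, a₃ := 0, a₄ := algebraMap (𝓞 K) K a,
                a₆ := algebraMap (𝓞 K) K b })
    (P : W.Point) (hP : ¬ IsOfFinAddOrder P)
    (x y : ℤ → K)
    (hxy : ∀ n : ℤ, n ≠ 0 → ∃ h : W.Nonsingular (x n) (y n),
      n • P = WeierstrassCurve.Affine.Point.some _ _ h)
    (Sbad : Set (HeightOneSpectrum (𝓞 K)))
    (hSbadFin : Sbad.Finite)
    (hSbadRam : ∀ q : HeightOneSpectrum (𝓞 K),
      (∃ p : ℕ, p.Prime ∧ q.asIdeal ^ 2 ∣ Ideal.span {(p : 𝓞 K)}) → q ∈ Sbad)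
    (hSbad2 : ∀ q : HeightOneSpectrum (𝓞 K), (2 : 𝓞 K) ∈ q.asIdeal → q ∈ Sbad)
    (hSbadSing : ∀ q : HeightOneSpectrum (𝓞 K),
      (-16 * (4 * a ^ 3 + 27 * b ^ 2) : 𝓞 K) ∈ q.asIdeal → q ∈ Sbad)
    (hSbadP : ∀ q : HeightOneSpectrum (𝓞 K),
      (ordAt q (x 1) < 0 ∨ ordAt q (y 1) < 0) → q ∈ Sbad)
    (S : ℤ → Set (HeightOneSpectrum (𝓞 K)))
    (hS : ∀ n : ℤ, n ≠ 0 →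
      S n = {q : HeightOneSpectrum (𝓞 K) | q ∉ Sbad ∧ ordAt q (x n) < 0})
    (hPrim : ∀ ℓ : ℕ, ℓ.Prime → ∀ j : ℕ, 1 ≤ j →
      ((S ((ℓ : ℤ) ^ j)) \ (S ((ℓ : ℤ) ^ (j - 1)))).Nonempty)
    :
    ∀ k n : ℤ, 1 ≤ k → 1 ≤ n → (Int.gcd k n = 1 ↔ S k ∩ S n = ∅) := by
  intro k n hk hn
  have k0 : k ≠ 0 := by omega
  have n0 : n ≠ 0 := by omega
  set aa := algebraMap (𝓞 K) K a with haa
  set bb := algebraMap (𝓞 K) K b with hbb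
  have ha1 : W.a₁ = 0 := by rw [hW]
  have ha2 : W.a₂ = 0 := by rw [hW]
  have ha3 : W.a₃ = 0 := by rw [hW]
  have ha4 : W.a₄ = aa := by rw [hW]
  have ha6 : W.a₆ = bb := by rw [hW]
  have hnegY : ∀ u w : K, W.negY u w = -w := by
    intro u w; rw [WeierstrassCurve.Affine.negY, ha1, ha3]; ring
  have hEq : ∀ m : ℤ, m ≠ 0 → (y m) ^ 2 = (x m) ^ 3 + aa * (x m) + bb := by
    intro m hm
    obtain ⟨h, -⟩ := hxy m hm
    have h' := (WeierstrassCurve.Affine.equation_iff (W := W) (x m) (y m)).mp h.1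
    rw [ha1, ha2, ha3, ha4, ha6] at h'
    linear_combination h'
  have hVa : ∀ q : HeightOneSpectrum (𝓞 K), q.valuation K aa ≤ 1 :=
    fun q => q.valuation_le_one (K := K) a
  have hVb : ∀ q : HeightOneSpectrum (𝓞 K), q.valuation K bb ≤ 1 :=
    fun q => q.valuation_le_one (K := K) b
  have hV2 : ∀ q : HeightOneSpectrum (𝓞 K), q.valuation K (2 : K) ≤ 1 := by
    intro q
    have h2 : q.valuation K (algebraMap (𝓞 K) K 2) ≤ 1 := q.valuation_le_one (K := K) 2
    rwa [map_ofNat] at h2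
  -- kernel closure under addition
  have hker : ∀ (q : HeightOneSpectrum (𝓞 K)) (m₁ m₂ : ℤ), m₁ ≠ 0 → m₂ ≠ 0 → m₁ + m₂ ≠ 0 →
      1 < q.valuation K (x m₁) → 1 < q.valuation K (x m₂) → 1 < q.valuation K (x (m₁ + m₂)) := by
    intro q m₁ m₂ hm1 hm2 hmm hv1 hv2
    obtain ⟨h₁, e₁⟩ := hxy m₁ hm1
    obtain ⟨h₂, e₂⟩ := hxy m₂ hm2
    obtain ⟨h₃, e₃⟩ := hxy (m₁ + m₂) hmm
    have hsum : WeierstrassCurve.Affine.Point.some _ _ h₃ =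
        WeierstrassCurve.Affine.Point.some _ _ h₁ + WeierstrassCurve.Affine.Point.some _ _ h₂ := by
      rw [← e₁, ← e₂, ← e₃, add_zsmul]
    by_cases hx12 : x m₁ = x m₂
    · by_cases hy12 : y m₁ = W.negY (x m₂) (y m₂)
      · rw [WeierstrassCurve.Affine.Point.add_of_Y_eq hx12 hy12] at hsum
        exact absurd hsum (fun hcon => by cases hcon)
      · rw [WeierstrassCurve.Affine.Point.add_of_Y_ne hy12] at hsum
        injection hsum with hx3 hy3
        -- y m₁ = y m₂ and y m₂ ≠ 0
        have hysq : (y m₁ - y m₂) * (y m₁ + y m₂) = 0 := by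
          have e1' := hEq m₁ hm1
          have e2' := hEq m₂ hm2
          rw [hx12] at e1'
          linear_combination e1' - e2'
        have hyy : y m₁ = y m₂ := by
          rcases mul_eq_zero.mp hysq with h | h
          · exact sub_eq_zero.mp h
          · exact absurd (by rw [hnegY]; linear_combination h) hy12
        have hy0 : y m₁ ≠ 0 := by
          intro h0
          exact hy12 (by rw [hnegY, ← hyy, h0, neg_zero])
        have hslope : W.slope (x m₁) (x m₂) (y m₁) (y m₂) =
            (3 * (x m₁) ^ 2 + aa) / (2 * (y m₁)) := by
          rw [WeierstrassCurve.Affine.slope_of_Y_ne hx12 hy12, hnegY, ha1, ha2, ha4]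
          congr 1 <;> ring
        refine double_val (q.valuation K) (hVa q) (hVb q) (hV2 q) (hEq m₁ hm1) hv1 hy0
          two_ne_zero ?_
        rw [hx3, WeierstrassCurve.Affine.addX, ha1, ha2, hslope, ← hx12]
        ring
    · rw [WeierstrassCurve.Affine.Point.add_of_X_ne hx12] at hsum
      injection hsum with hx3 hy3
      have hslope : W.slope (x m₁) (x m₂) (y m₁) (y m₂) =
          (y m₁ - y m₂) / (x m₁ - x m₂) :=
        WeierstrassCurve.Affine.slope_of_X_ne hx12
      refine chord_val (q.valuation K) (hVa q) (hVb q) (hV2 q) (hEq m₁ hm1) (hEq m₂ hm2)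
        hv1 hv2 hx12 ?_
      rw [hx3, WeierstrassCurve.Affine.addX, ha1, ha2, hslope]
      ring
  -- x is even
  have hnegx : ∀ m : ℤ, m ≠ 0 → x (-m) = x m := by
    intro m hm
    obtain ⟨h₁, e₁⟩ := hxy m hm
    obtain ⟨h₂, e₂⟩ := hxy (-m) (neg_ne_zero.mpr hm)
    have hcalc : WeierstrassCurve.Affine.Point.some _ _ h₂ =
        WeierstrassCurve.Affine.Point.some _ _ ((WeierstrassCurve.Affine.nonsingular_neg ..).mpr h₁) := by
      calc WeierstrassCurve.Affine.Point.some _ _ h₂ = (-m) • P := e₂.symm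
        _ = -(m • P) := neg_zsmul P m
        _ = -(WeierstrassCurve.Affine.Point.some _ _ h₁) := by rw [e₁]
        _ = _ := WeierstrassCurve.Affine.Point.neg_some h₁
    injection hcalc
  have hkerneg : ∀ (q : HeightOneSpectrum (𝓞 K)) (m : ℤ), m ≠ 0 →
      1 < q.valuation K (x m) → 1 < q.valuation K (x (-m)) := by
    intro q m hm h
    rw [hnegx m hm]; exact h
  have hmemS : ∀ (q : HeightOneSpectrum (𝓞 K)) (m : ℤ), m ≠ 0 →
      (q ∈ S m ↔ (q ∉ Sbad ∧ 1 < q.valuation K (x m))) := by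
    intro q m hm
    rw [hS m hm]
    simp only [Set.mem_setOf_eq, ordAt_lt_zero_iff]
  constructor
  · -- gcd = 1 → empty intersection
    intro hgcd
    rw [Set.eq_empty_iff_forall_notMem]
    rintro q ⟨hqk, hqn⟩
    obtain ⟨hqbad, hvk⟩ := (hmemS q k k0).mp hqk
    obtain ⟨-, hvn⟩ := (hmemS q n n0).mp hqn
    have hgcdp : 1 < q.valuation K (x (Int.gcd k n : ℤ)) :=
      gcd_prop (hker q) (hkerneg q) k0 hvk hvn
    rw [hgcd] at hgcdp
    have : ordAt q (x 1) < 0 := (ordAt_lt_zero_iff q _).mpr (by exact_mod_cast hgcdp)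
    exact hqbad (hSbadP q (Or.inl this))
  · -- empty intersection → gcd = 1
    intro hempty
    by_contra hgcd
    have hg0 : Int.gcd k n ≠ 0 := by
      intro h
      exact k0 (Int.gcd_eq_zero_iff.mp h).1
    have hg2 : 2 ≤ Int.gcd k n := by omega
    set ℓ : ℕ := (Int.gcd k n).minFac with hℓ
    have hℓp : ℓ.Prime := Nat.minFac_prime (by omega)
    obtain ⟨q, hqin, -⟩ := hPrim ℓ hℓp 1 le_rfl
    rw [pow_one] at hqin
    have hℓ0 : (ℓ : ℤ) ≠ 0 := by
      exact_mod_cast hℓp.pos.ne'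
    obtain ⟨hqbad, hqv⟩ := (hmemS q ℓ hℓ0).mp hqin
    have hdvdk : (ℓ : ℤ) ∣ k := by
      refine dvd_trans ?_ (Int.gcd_dvd_left k n : (Int.gcd k n : ℤ) ∣ k)
      exact_mod_cast Int.natCast_dvd_natCast.mpr ((Int.gcd k n).minFac_dvd)
    have hdvdn : (ℓ : ℤ) ∣ n := by
      refine dvd_trans ?_ (Int.gcd_dvd_right k n : (Int.gcd k n : ℤ) ∣ n)
      exact_mod_cast Int.natCast_dvd_natCast.mpr ((Int.gcd k n).minFac_dvd)
    obtain ⟨c, hc⟩ := hdvdk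
    obtain ⟨d, hd⟩ := hdvdn
    have hvk : 1 < q.valuation K (x k) := by
      rw [hc]
      exact mul_prop (hker q) (hkerneg q) (hc ▸ k0) hqv
    have hvn : 1 < q.valuation K (x n) := by
      rw [hd]
      exact mul_prop (hker q) (hkerneg q) (hd ▸ n0) hqv
    have hqS : q ∈ S k ∩ S n :=
      ⟨(hmemS q k k0).mpr ⟨hqbad, hvk⟩, (hmemS q n n0).mpr ⟨hqbad, hvn⟩⟩
    rw [hempty] at hqS
    exact Set.notMem_empty q hqS
end

section
/- For all coprime integers m, k ≥ 1, the ideal c_m·c_k divides the ideal c_{mk} in O_K. -/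
open IsDedekindDomain IsDedekindDomain.HeightOneSpectrum NumberField WeierstrassCurve Filter

section Aux

variable {K : Type*} [Field K] [NumberField K] (q : HeightOneSpectrum (𝓞 K))

lemma ord_spec {z : K} (hz : z ≠ 0) :
    q.valuation K z = ((Multiplicative.ofAdd (-(ordAt q z)) : Multiplicative ℤ) : WithZero (Multiplicative ℤ)) := by
  rw [ordAt, dif_neg hz, neg_neg, ofAdd_toAdd, WithZero.coe_unzero]

lemma ordAt_mul {z w : K} (hz : z ≠ 0) (hw : w ≠ 0) :
    ordAt q (z * w) = ordAt q z + ordAt q w := by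
  have h := (q.valuation K).map_mul z w
  rw [ord_spec q (mul_ne_zero hz hw), ord_spec q hz, ord_spec q hw, ← WithZero.coe_mul,
    WithZero.coe_inj, ← ofAdd_add] at h
  have := Multiplicative.ofAdd.injective h
  omega

lemma ordAt_one : ordAt q (1 : K) = 0 := by
  have := ordAt_mul q (one_ne_zero (α := K)) (one_ne_zero (α := K))
  rw [one_mul] at this; omega

lemma ordAt_min_le_add {z w : K} (hz : z ≠ 0) (hw : w ≠ 0) (hzw : z + w ≠ 0) :
    min (ordAt q z) (ordAt q w) ≤ ordAt q (z + w) := by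
  have h := (q.valuation K).map_add z w
  rw [ord_spec q hzw, ord_spec q hz, ord_spec q hw] at h
  rcases le_max_iff.mp h with h' | h' <;>
  · rw [WithZero.coe_le_coe, Multiplicative.ofAdd_le] at h'
    omega

lemma ordAt_int {r : 𝓞 K} (hr : r ≠ 0) : 0 ≤ ordAt q (algebraMap (𝓞 K) K r) := by
  have h := q.valuation_le_one (K := K) r
  have hr' : algebraMap (𝓞 K) K r ≠ 0 := by
    simpa using hr
  rw [ord_spec q hr'] at h
  rw [show (1 : WithZero (Multiplicative ℤ)) = ((Multiplicative.ofAdd (0:ℤ) : Multiplicative ℤ) : WithZero (Multiplicative ℤ)) by rfl, WithZero.coe_le_coe, Multiplicative.ofAdd_le] at h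
  omega

/-- `z` is zero or has valuation at least `m` at `q`. -/
def og (q : HeightOneSpectrum (𝓞 K)) (m : ℤ) (z : K) : Prop := z = 0 ∨ m ≤ ordAt q z

lemma og_zero (m : ℤ) : og q m (0 : K) := Or.inl rfl

lemma og_mono {m m' : ℤ} {z : K} (h : og q m z) (hm : m' ≤ m) : og q m' z := by
  rcases h with h | h
  · exact Or.inl h
  · exact Or.inr (le_trans hm h)

lemma og_val {m : ℤ} {z : K} (hz : z ≠ 0) (h : og q m z) : m ≤ ordAt q z := by
  rcases h with h | h
  · exact absurd h hz
  · exact h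

lemma ordAt_neg {z : K} (hz : z ≠ 0) : ordAt q (-z) = ordAt q z := by
  have hm : ordAt q ((-1 : K) * -1) = ordAt q (-1 : K) + ordAt q (-1 : K) :=
    ordAt_mul q (by norm_num) (by norm_num)
  rw [show ((-1 : K) * -1) = 1 by ring, ordAt_one] at hm
  have h2 : ordAt q (-z) = ordAt q (-1 : K) + ordAt q z := by
    rw [show (-z : K) = (-1) * z by ring]
    exact ordAt_mul q (by norm_num) hz
  omega

lemma og_neg {m : ℤ} {z : K} (h : og q m z) : og q m (-z) := by
  rcases h with h | h
  · exact Or.inl (by rw [h, neg_zero])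
  · rcases eq_or_ne z 0 with rfl | hz
    · exact Or.inl (by rw [neg_zero])
    · exact Or.inr (by rw [ordAt_neg q hz]; exact h)

lemma og_add {m : ℤ} {z w : K} (h : og q m z) (h' : og q m w) : og q m (z + w) := by
  rcases h with rfl | h
  · simpa using h'
  rcases h' with rfl | h'
  · rw [add_zero]; exact Or.inr h
  rcases eq_or_ne z 0 with rfl | hz
  · rw [zero_add]; exact Or.inr h'
  rcases eq_or_ne w 0 with rfl | hw
  · rw [add_zero]; exact Or.inr h
  rcases eq_or_ne (z + w) 0 with hzw | hzw
  · exact Or.inl hzw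
  · exact Or.inr (le_trans (le_min h h') (ordAt_min_le_add q hz hw hzw))

lemma og_mul {m m' : ℤ} {z w : K} (h : og q m z) (h' : og q m' w) : og q (m + m') (z * w) := by
  rcases h with rfl | h
  · exact Or.inl (by rw [zero_mul])
  rcases h' with rfl | h'
  · exact Or.inl (by rw [mul_zero])
  rcases eq_or_ne z 0 with rfl | hz
  · exact Or.inl (by rw [zero_mul])
  rcases eq_or_ne w 0 with rfl | hw
  · exact Or.inl (by rw [mul_zero])
  · exact Or.inr (by rw [ordAt_mul q hz hw]; omega)

lemma ordAt_add_eq_left {z w : K} (hz : z ≠ 0) (h : og q (ordAt q z + 1) w) :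
    ordAt q (z + w) = ordAt q z := by
  rcases h with rfl | h
  · rw [add_zero]
  rcases eq_or_ne w 0 with rfl | hw
  · rw [add_zero]
  have hzw : z + w ≠ 0 := by
    intro h0
    have hwz : w = -z := by linear_combination h0
    rw [hwz, ordAt_neg q hz] at h; omega
  have h1 : min (ordAt q z) (ordAt q w) ≤ ordAt q (z + w) := ordAt_min_le_add q hz hw hzw
  have h2 : ordAt q z ≤ ordAt q (z + w) := by omega
  by_contra hne
  have h3 : ordAt q (z + w) > ordAt q z := by omega
  have h4 : min (ordAt q (z + w)) (ordAt q (-w)) ≤ ordAt q ((z + w) + -w) :=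
    ordAt_min_le_add q hzw (neg_ne_zero.mpr hw) (by simpa using hz)
  rw [show (z + w) + -w = z by ring, ordAt_neg q hw] at h4
  omega

lemma ordAt_inv {z : K} (hz : z ≠ 0) : ordAt q z⁻¹ = -ordAt q z := by
  have := ordAt_mul q hz (inv_ne_zero hz)
  rw [mul_inv_cancel₀ hz, ordAt_one] at this; omega

lemma ordAt_div {z w : K} (hz : z ≠ 0) (hw : w ≠ 0) :
    ordAt q (z / w) = ordAt q z - ordAt q w := by
  rw [div_eq_mul_inv, ordAt_mul q hz (inv_ne_zero hw), ordAt_inv q hw]; ring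

lemma one_add_unit {z : K} (h : og q 1 z) : (1 : K) + z ≠ 0 ∧ ordAt q (1 + z) = 0 := by
  have h0 : ordAt q (1 : K) = 0 := ordAt_one q
  have hval : ordAt q (1 + z) = ordAt q (1 : K) := by
    refine ordAt_add_eq_left q one_ne_zero ?_
    rw [h0]; exact h
  refine ⟨?_, by rw [hval, h0]⟩
  intro h1
  have hz : z = -1 := by linear_combination h1
  rcases h with h | h
  · rw [hz] at h; norm_num at h
  · rw [hz, ordAt_neg q one_ne_zero, h0] at h; omega

lemma ordAt_pow {z : K} (hz : z ≠ 0) (n : ℕ) : ordAt q (z ^ n) = n * ordAt q z := by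
  induction n with
  | zero => simpa using ordAt_one q
  | succ n ih =>
    rw [pow_succ, ordAt_mul q (pow_ne_zero n hz) hz, ih]; push_cast; ring

lemma pole_structure {a' b' x₀ y₀ : K} (ha : og q 0 a') (hb : og q 0 b')
    (E : y₀ ^ 2 = x₀ ^ 3 + a' * x₀ + b') (hvx : ordAt q x₀ < 0) :
    x₀ ≠ 0 ∧ y₀ ≠ 0 ∧ 2 * ordAt q y₀ = 3 * ordAt q x₀ := by
  have hx0 : x₀ ≠ 0 := by rintro rfl; simp [ordAt] at hvx
  have hcube : ordAt q (x₀ ^ 3) = 3 * ordAt q x₀ := ordAt_pow q hx0 3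
  have htail : og q (3 * ordAt q x₀ + 1) (a' * x₀ + b') := by
    refine og_mono q (og_add q (m := ordAt q x₀) ?_ ?_) (by omega)
    · exact og_mono q (og_mul q ha (Or.inr le_rfl)) (by omega)
    · exact og_mono q hb (by omega)
  have hRHS : ordAt q (x₀ ^ 3 + (a' * x₀ + b')) = 3 * ordAt q x₀ := by
    rw [ordAt_add_eq_left q (pow_ne_zero 3 hx0) (by rwa [hcube]), hcube]
  have hy0 : y₀ ≠ 0 := by
    rintro rfl
    have h0 : a' * x₀ + b' = -x₀ ^ 3 := by linear_combination -E
    rw [h0] at htail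
    have h2 := og_val q (m := 3 * ordAt q x₀ + 1) (neg_ne_zero.mpr (pow_ne_zero 3 hx0)) htail
    rw [ordAt_neg q (pow_ne_zero 3 hx0), hcube] at h2
    omega
  have hy2 : ordAt q (y₀ ^ 2) = 2 * ordAt q y₀ := ordAt_pow q hy0 2
  have : ordAt q (y₀ ^ 2) = 3 * ordAt q x₀ := by
    rw [E, show x₀ ^ 3 + a' * x₀ + b' = x₀ ^ 3 + (a' * x₀ + b') by ring, hRHS]
  exact ⟨hx0, hy0, by omega⟩

lemma og_one : og q 0 (1 : K) := Or.inr (by rw [ordAt_one q])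

lemma og_two : og q 0 (2 : K) := by
  have := og_add q (og_one q) (og_one q)
  norm_num at this ⊢; exact this

lemma og_three : og q 0 (3 : K) := by
  have := og_add q (og_add q (og_one q) (og_one q)) (og_one q)
  norm_num at this ⊢; exact this

lemma og_sq {m : ℤ} {z : K} (h : og q m z) : og q (2 * m) (z ^ 2) := by
  rw [pow_two]; exact og_mono q (og_mul q h h) (by omega)

lemma og_cube {m : ℤ} {z : K} (h : og q m z) : og q (3 * m) (z ^ 3) := by
  rw [pow_succ]
  exact og_mono q (og_mul q (og_sq q h) h) (by omega)

lemma closure_lemma {a' b' : K} (ha : og q 0 a') (hb : og q 0 b')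
    {s : ℤ} (hs : 1 ≤ s)
    {x₁ y₁ x₂ y₂ x₃ y₃ L c : K}
    (E₁ : y₁ ^ 2 = x₁ ^ 3 + a' * x₁ + b')
    (E₂ : y₂ ^ 2 = x₂ ^ 3 + a' * x₂ + b')
    (E₃ : y₃ ^ 2 = x₃ ^ 3 + a' * x₃ + b')
    (hl₁ : y₁ = L * x₁ + c) (hl₂ : y₂ = L * x₂ + c)
    (htan : x₁ = x₂ → 2 * y₁ * L = 3 * x₁ ^ 2 + a')
    (hy₃ : y₃ = L * x₃ + c)
    (hy₃0 : y₃ ≠ 0)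
    (h₁ : ordAt q x₁ ≤ -(2 * s)) (h₂ : ordAt q x₂ ≤ -(2 * s)) :
    ordAt q x₃ ≤ -(2 * s) := by
  obtain ⟨hx₁0, hy₁0, hp₁⟩ := pole_structure q ha hb E₁ (by omega)
  obtain ⟨hx₂0, hy₂0, hp₂⟩ := pole_structure q ha hb E₂ (by omega)
  obtain ⟨t₁, ht₁⟩ : ∃ t, t = x₁ / y₁ := ⟨_, rfl⟩
  obtain ⟨t₂, ht₂⟩ : ∃ t, t = x₂ / y₂ := ⟨_, rfl⟩
  obtain ⟨u₁, hu₁⟩ : ∃ u, u = 1 / y₁ := ⟨_, rfl⟩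
  obtain ⟨u₂, hu₂⟩ : ∃ u, u = 1 / y₂ := ⟨_, rfl⟩
  have hvt₁ : ordAt q t₁ = ordAt q x₁ - ordAt q y₁ := by
    rw [ht₁, ordAt_div q hx₁0 hy₁0]
  have hvt₂ : ordAt q t₂ = ordAt q x₂ - ordAt q y₂ := by
    rw [ht₂, ordAt_div q hx₂0 hy₂0]
  have hvu₁ : ordAt q u₁ = -ordAt q y₁ := by rw [hu₁, one_div, ordAt_inv q hy₁0]
  have hvu₂ : ordAt q u₂ = -ordAt q y₂ := by rw [hu₂, one_div, ordAt_inv q hy₂0]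
  have hog_t₁ : og q s t₁ := Or.inr (by omega)
  have hog_t₂ : og q s t₂ := Or.inr (by omega)
  have hog_u₁ : og q (3 * s) u₁ := Or.inr (by omega)
  have hog_u₂ : og q (3 * s) u₂ := Or.inr (by omega)
  have idA₁ : u₁ = t₁ ^ 3 + a' * t₁ * u₁ ^ 2 + b' * u₁ ^ 3 := by
    have e1 : u₁ * y₁ ^ 3 = y₁ ^ 2 := by rw [hu₁]; field_simp [hy₁0]
    have e2 : (t₁ ^ 3 + a' * t₁ * u₁ ^ 2 + b' * u₁ ^ 3) * y₁ ^ 3 = x₁ ^ 3 + a' * x₁ + b' := by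
      rw [ht₁, hu₁]; field_simp [hy₁0]
    exact mul_right_cancel₀ (pow_ne_zero 3 hy₁0) (by rw [e1, e2, E₁])
  have idA₂ : u₂ = t₂ ^ 3 + a' * t₂ * u₂ ^ 2 + b' * u₂ ^ 3 := by
    have e1 : u₂ * y₂ ^ 3 = y₂ ^ 2 := by rw [hu₂]; field_simp [hy₂0]
    have e2 : (t₂ ^ 3 + a' * t₂ * u₂ ^ 2 + b' * u₂ ^ 3) * y₂ ^ 3 = x₂ ^ 3 + a' * x₂ + b' := by
      rw [ht₂, hu₂]; field_simp [hy₂0]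
    exact mul_right_cancel₀ (pow_ne_zero 3 hy₂0) (by rw [e1, e2, E₂])
  obtain ⟨zD, hzD⟩ : ∃ z, z = a' * t₂ * (u₁ + u₂) + b' * (u₁ ^ 2 + u₁ * u₂ + u₂ ^ 2) :=
    ⟨_, rfl⟩
  have hog_zD : og q 1 zD := by
    rw [hzD]
    refine og_mono q (og_add q (m := 4 * s) ?_ ?_) (by omega)
    · exact og_mono q (og_mul q (og_mul q ha hog_t₂) (og_add q hog_u₁ hog_u₂)) (by omega)
    · refine og_mono q (og_mul q hb (og_add q (og_add q (m := 6 * s) ?_ ?_) ?_)) (by omega)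
      · exact og_mono q (og_sq q hog_u₁) (by omega)
      · exact og_mono q (og_mul q hog_u₁ hog_u₂) (by omega)
      · exact og_mono q (og_sq q hog_u₂) (by omega)
  have hDne : (1 : K) - zD ≠ 0 ∧ ordAt q (1 - zD) = 0 := by
    have h := one_add_unit q (og_neg q hog_zD)
    rwa [← sub_eq_add_neg] at h
  have idC : (u₁ - u₂) * (1 - zD) = (t₁ - t₂) * (t₁ ^ 2 + t₁ * t₂ + t₂ ^ 2 + a' * u₁ ^ 2) := by
    rw [hzD]; linear_combination idA₁ - idA₂
  have hc0 : c ≠ 0 := by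
    intro hc
    subst hc
    rw [add_zero] at hl₁ hl₂
    by_cases hx12 : x₁ = x₂
    · have T := htan hx12
      have haeq : a' = 2 * L ^ 2 * x₁ - 3 * x₁ ^ 2 := by linear_combination -T + 2 * L * hl₁
      have hbeq : b' = 2 * x₁ ^ 3 - L ^ 2 * x₁ ^ 2 := by
        linear_combination -E₁ + (L * x₁ + y₁) * hl₁ - x₁ * haeq
      have hkey : x₁ ^ 3 = a' * x₁ + 2 * b' := by rw [haeq, hbeq]; ring
      have htail : og q (ordAt q x₁) (a' * x₁ + 2 * b') := by
        refine og_mono q (og_add q (m := ordAt q x₁) ?_ ?_) le_rfl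
        · exact og_mono q (og_mul q ha (Or.inr le_rfl)) (by omega)
        · exact og_mono q (og_mul q (og_two q) hb) (by omega)
      rw [← hkey] at htail
      have := og_val q (pow_ne_zero 3 hx₁0) htail
      rw [ordAt_pow q hx₁0 3] at this
      omega
    · have hL0 : L ≠ 0 := by
        intro h; rw [h, zero_mul] at hl₁; exact hy₁0 hl₁
      have ht12 : t₁ = t₂ := by
        rw [ht₁, ht₂, hl₁, hl₂]
        field_simp
      rw [ht12, sub_self, zero_mul] at idC
      rcases mul_eq_zero.mp idC with h | h
      · have h'' : u₁ = u₂ := by linear_combination h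
        rw [hu₁, hu₂, div_eq_div_iff hy₁0 hy₂0, one_mul, one_mul] at h''
        have hx : x₁ * y₂ = x₂ * y₁ := by
          have h3 := ht12
          rw [ht₁, ht₂, div_eq_div_iff hy₁0 hy₂0] at h3
          exact h3
        rw [h''] at hx
        exact hx12 (mul_right_cancel₀ hy₁0 hx)
      · exact hDne.1 h
  -- introduce slope quantities in the (t,u) chart
  obtain ⟨μ, hμdef⟩ : ∃ m, m = -L / c := ⟨_, rfl⟩
  obtain ⟨γ, hγdef⟩ : ∃ g, g = 1 / c := ⟨_, rfl⟩
  have hγ0 : γ ≠ 0 := by rw [hγdef]; exact one_div_ne_zero hc0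
  have hline₁ : u₁ = μ * t₁ + γ := by
    have e1 : u₁ * (c * y₁) = c := by rw [hu₁]; field_simp [hy₁0]
    have e2 : (μ * t₁ + γ) * (c * y₁) = y₁ - L * x₁ := by
      rw [hμdef, ht₁, hγdef]; field_simp [hy₁0, hc0]; ring
    have e3 : u₁ * (c * y₁) = (μ * t₁ + γ) * (c * y₁) := by
      rw [e1, e2]; linear_combination -hl₁
    exact mul_right_cancel₀ (mul_ne_zero hc0 hy₁0) e3
  have hline₂ : u₂ = μ * t₂ + γ := by
    have e1 : u₂ * (c * y₂) = c := by rw [hu₂]; field_simp [hy₂0]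
    have e2 : (μ * t₂ + γ) * (c * y₂) = y₂ - L * x₂ := by
      rw [hμdef, ht₂, hγdef]; field_simp [hy₂0, hc0]; ring
    have e3 : u₂ * (c * y₂) = (μ * t₂ + γ) * (c * y₂) := by
      rw [e1, e2]; linear_combination -hl₂
    exact mul_right_cancel₀ (mul_ne_zero hc0 hy₂0) e3
  -- the slope estimate
  have hμ : og q (2 * s) μ := by
    by_cases hx12 : x₁ = x₂
    · -- tangent case
      have T := htan hx12
      have hkey : -L * (y₁ ^ 2 - 2 * a' * x₁ - 3 * b') = (3 * x₁ ^ 2 + a') * c := by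
        linear_combination (-3 * L) * E₁ + (L * x₁ + c) * T + 2 * L * y₁ * hl₁
      obtain ⟨zD', hzD'⟩ : ∃ z, z = 2 * a' * t₁ * u₁ + 3 * b' * u₁ ^ 2 := ⟨_, rfl⟩
      have hog_zD' : og q 1 zD' := by
        rw [hzD']
        refine og_mono q (og_add q (m := 4 * s) ?_ ?_) (by omega)
        · exact og_mono q
            (og_mul q (og_mul q (og_mul q (og_two q) ha) hog_t₁) hog_u₁) (by omega)
        · exact og_mono q (og_mul q (og_mul q (og_three q) hb) (og_sq q hog_u₁)) (by omega)
      have hD' := one_add_unit q (og_neg q hog_zD')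
      rw [← sub_eq_add_neg] at hD'
      have e1 : μ * (1 - zD') * (c * y₁ ^ 2) = -L * (y₁ ^ 2 - 2 * a' * x₁ - 3 * b') := by
        rw [hμdef, hzD', ht₁, hu₁]; field_simp [hy₁0, hc0]; ring
      have e2 : (3 * t₁ ^ 2 + a' * u₁ ^ 2) * (c * y₁ ^ 2) = (3 * x₁ ^ 2 + a') * c := by
        rw [ht₁, hu₁]; field_simp [hy₁0, hc0]
      have hμD : μ * (1 - zD') = 3 * t₁ ^ 2 + a' * u₁ ^ 2 := by
        refine mul_right_cancel₀ (mul_ne_zero hc0 (pow_ne_zero 2 hy₁0)) ?_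
        rw [e1, e2, hkey]
      rcases eq_or_ne μ 0 with h | hμne
      · exact Or.inl h
      · have hNne : 3 * t₁ ^ 2 + a' * u₁ ^ 2 ≠ 0 := by
          rw [← hμD]; exact mul_ne_zero hμne hD'.1
        have hogN : og q (2 * s) (3 * t₁ ^ 2 + a' * u₁ ^ 2) := by
          refine og_add q ?_ ?_
          · exact og_mono q (og_mul q (og_three q) (og_sq q hog_t₁)) (by omega)
          · exact og_mono q (og_mul q ha (og_sq q hog_u₁)) (by omega)
        have hval := og_val q hNne hogN
        rw [← hμD, ordAt_mul q hμne hD'.1, hD'.2] at hval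
        exact Or.inr (by omega)
    · -- distinct case
      have ht₁₂ : t₁ ≠ t₂ := by
        intro h
        rw [h, sub_self, zero_mul] at idC
        rcases mul_eq_zero.mp idC with h' | h'
        · have h'' : u₁ = u₂ := by linear_combination h'
          rw [hu₁, hu₂, div_eq_div_iff hy₁0 hy₂0, one_mul, one_mul] at h''
          have hx : x₁ * y₂ = x₂ * y₁ := by
            have h3 := h
            rw [ht₁, ht₂, div_eq_div_iff hy₁0 hy₂0] at h3
            exact h3
          rw [h''] at hx
          exact hx12 (mul_right_cancel₀ hy₁0 hx)
        · exact hDne.1 h'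
      have hrel : μ * (t₁ - t₂) = u₁ - u₂ := by linear_combination hline₂ - hline₁
      have hμN : μ * (1 - zD) = t₁ ^ 2 + t₁ * t₂ + t₂ ^ 2 + a' * u₁ ^ 2 := by
        refine mul_left_cancel₀ (sub_ne_zero.mpr ht₁₂) ?_
        linear_combination (1 - zD) * hrel + idC
      rcases eq_or_ne μ 0 with h | hμne
      · exact Or.inl h
      · have hNne : t₁ ^ 2 + t₁ * t₂ + t₂ ^ 2 + a' * u₁ ^ 2 ≠ 0 := by
          rw [← hμN]; exact mul_ne_zero hμne hDne.1
        have hogN : og q (2 * s) (t₁ ^ 2 + t₁ * t₂ + t₂ ^ 2 + a' * u₁ ^ 2) := by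
          refine og_add q (og_add q (og_add q ?_ ?_) ?_) ?_
          · exact og_mono q (og_sq q hog_t₁) (by omega)
          · exact og_mono q (og_mul q hog_t₁ hog_t₂) (by omega)
          · exact og_mono q (og_sq q hog_t₂) (by omega)
          · exact og_mono q (og_mul q ha (og_sq q hog_u₁)) (by omega)
        have hval := og_val q hNne hogN
        rw [← hμN, ordAt_mul q hμne hDne.1, hDne.2] at hval
        exact Or.inr (by omega)
  -- the intercept estimate
  have hogγ : og q (3 * s) γ := by
    have : γ = u₁ + -(μ * t₁) := by linear_combination -hline₁
    rw [this]
    refine og_add q hog_u₁ (og_neg q (og_mono q (og_mul q hμ hog_t₁) (by omega)))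
  have hvγ : 3 * s ≤ ordAt q γ := og_val q hγ0 hogγ
  -- point three in the chart
  obtain ⟨t₃, ht₃⟩ : ∃ t, t = x₃ / y₃ := ⟨_, rfl⟩
  obtain ⟨u₃, hu₃⟩ : ∃ u, u = 1 / y₃ := ⟨_, rfl⟩
  have hu₃0 : u₃ ≠ 0 := by rw [hu₃]; exact one_div_ne_zero hy₃0
  have hvu₃ : ordAt q u₃ = -ordAt q y₃ := by rw [hu₃, one_div, ordAt_inv q hy₃0]
  have hline₃ : u₃ = μ * t₃ + γ := by
    have e1 : u₃ * (c * y₃) = c := by rw [hu₃]; field_simp [hy₃0]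
    have e2 : (μ * t₃ + γ) * (c * y₃) = y₃ - L * x₃ := by
      rw [hμdef, ht₃, hγdef]; field_simp [hy₃0, hc0]; ring
    have e3 : u₃ * (c * y₃) = (μ * t₃ + γ) * (c * y₃) := by
      rw [e1, e2]; linear_combination -hy₃
    exact mul_right_cancel₀ (mul_ne_zero hc0 hy₃0) e3
  have hx₃0 : x₃ ≠ 0 := by
    intro h
    have ht₃0 : t₃ = 0 := by rw [ht₃, h, zero_div]
    have : u₃ = γ := by rw [hline₃, ht₃0]; ring
    have hvy₃ : ordAt q y₃ ≤ -(3 * s) := by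
      rw [this] at hvu₃; omega
    have hb3 : b' = y₃ ^ 2 := by rw [E₃, h]; ring
    have hbne : b' ≠ 0 := by rw [hb3]; exact pow_ne_zero 2 hy₃0
    have hv := og_val q hbne hb
    rw [hb3, ordAt_pow q hy₃0 2] at hv
    omega
  have ht₃0 : t₃ ≠ 0 := by rw [ht₃]; exact div_ne_zero hx₃0 hy₃0
  have idA₃ : u₃ = t₃ ^ 3 + a' * t₃ * u₃ ^ 2 + b' * u₃ ^ 3 := by
    have e1 : u₃ * y₃ ^ 3 = y₃ ^ 2 := by rw [hu₃]; field_simp [hy₃0]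
    have e2 : (t₃ ^ 3 + a' * t₃ * u₃ ^ 2 + b' * u₃ ^ 3) * y₃ ^ 3 = x₃ ^ 3 + a' * x₃ + b' := by
      rw [ht₃, hu₃]; field_simp [hy₃0]
    exact mul_right_cancel₀ (pow_ne_zero 3 hy₃0) (by rw [e1, e2, E₃])
  obtain ⟨zα, hzα⟩ : ∃ z, z = a' * μ ^ 2 + b' * μ ^ 3 := ⟨_, rfl⟩
  have hog_zα : og q 1 zα := by
    rw [hzα]
    refine og_mono q (og_add q (m := 4 * s) ?_ ?_) (by omega)
    · exact og_mono q (og_mul q ha (og_sq q hμ)) (by omega)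
    · exact og_mono q (og_mul q hb (og_cube q hμ)) (by omega)
  have hα := one_add_unit q hog_zα
  have hH : (1 + zα) * t₃ ^ 3 =
      -((2 * a' * μ * γ + 3 * b' * μ ^ 2 * γ) * t₃ ^ 2 +
        (a' * γ ^ 2 + 3 * b' * μ * γ ^ 2 - μ) * t₃ + (b' * γ ^ 3 - γ)) := by
    rw [hzα]
    linear_combination (-1) * idA₃ +
      (1 - a' * t₃ * (u₃ + (μ * t₃ + γ)) - b' * (u₃ ^ 2 + u₃ * (μ * t₃ + γ) + (μ * t₃ + γ) ^ 2)) *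
        hline₃
  have hwt₃ : s ≤ ordAt q t₃ := by
    by_contra hcon
    push_neg at hcon
    have hogβ : og q (5 * s) (2 * a' * μ * γ + 3 * b' * μ ^ 2 * γ) := by
      refine og_add q ?_ ?_
      · exact og_mono q (og_mul q (og_mul q (og_mul q (og_two q) ha) hμ) hogγ) (by omega)
      · exact og_mono q (og_mul q (og_mul q (og_mul q (og_three q) hb) (og_sq q hμ)) hogγ)
          (by omega)
    have hogγ' : og q (2 * s) (a' * γ ^ 2 + 3 * b' * μ * γ ^ 2 - μ) := by
      rw [sub_eq_add_neg]
      refine og_add q (og_add q ?_ ?_) (og_neg q hμ)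
      · exact og_mono q (og_mul q ha (og_sq q hogγ)) (by omega)
      · exact og_mono q (og_mul q (og_mul q (og_mul q (og_three q) hb) hμ) (og_sq q hogγ))
          (by omega)
    have hogδ : og q (3 * s) (b' * γ ^ 3 - γ) := by
      rw [sub_eq_add_neg]
      refine og_add q ?_ (og_neg q hogγ)
      · exact og_mono q (og_mul q hb (og_cube q hogγ)) (by omega)
    have hogt₃ : og q (ordAt q t₃) t₃ := Or.inr le_rfl
    have hogRHS : og q (3 * ordAt q t₃ + 1)
        (-((2 * a' * μ * γ + 3 * b' * μ ^ 2 * γ) * t₃ ^ 2 +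
          (a' * γ ^ 2 + 3 * b' * μ * γ ^ 2 - μ) * t₃ + (b' * γ ^ 3 - γ))) := by
      refine og_neg q (og_add q (og_add q ?_ ?_) ?_)
      · exact og_mono q (og_mul q hogβ (og_sq q hogt₃)) (by omega)
      · exact og_mono q (og_mul q hogγ' hogt₃) (by omega)
      · exact og_mono q hogδ (by omega)
    rw [← hH] at hogRHS
    have hLne : (1 + zα) * t₃ ^ 3 ≠ 0 := mul_ne_zero hα.1 (pow_ne_zero 3 ht₃0)
    have := og_val q hLne hogRHS
    rw [ordAt_mul q hα.1 (pow_ne_zero 3 ht₃0), hα.2, ordAt_pow q ht₃0 3] at this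
    omega
  have hvu₃' : 3 * s ≤ ordAt q u₃ := by
    have hogu₃ : og q (3 * s) u₃ := by
      rw [hline₃]
      refine og_add q (og_mono q (og_mul q hμ (Or.inr (le_refl (ordAt q t₃)))) (by omega)) hogγ
    exact og_val q hu₃0 hogu₃
  have hvy₃ : ordAt q y₃ ≤ -(3 * s) := by omega
  have hvx₃ : ordAt q x₃ < 0 := by
    by_contra hge
    push_neg at hge
    have hogx₃ : og q 0 x₃ := Or.inr hge
    have hogRHS : og q 0 (x₃ ^ 3 + a' * x₃ + b') := by
      refine og_add q (og_add q ?_ ?_) hb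
      · exact og_mono q (og_cube q hogx₃) (by omega)
      · exact og_mono q (og_mul q ha hogx₃) (by omega)
    rw [← E₃] at hogRHS
    have := og_val q (pow_ne_zero 2 hy₃0) hogRHS
    rw [ordAt_pow q hy₃0 2] at this
    omega
  obtain ⟨-, -, hp₃⟩ := pole_structure q ha hb E₃ hvx₃
  omega

lemma og_int (r : 𝓞 K) : og q 0 (algebraMap (𝓞 K) K r) := by
  rcases eq_or_ne r 0 with rfl | hr
  · exact Or.inl (map_zero _)
  · exact Or.inr (ordAt_int q hr)

open scoped Classical in
lemma growth
    (a b : 𝓞 K)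
    (W : WeierstrassCurve.Affine K)
    (hW : W = { a₁ := 0, a₂ := 0, a₃ := 0, a₄ := algebraMap (𝓞 K) K a,
                a₆ := algebraMap (𝓞 K) K b })
    (P : W.Point) (hP : ¬ IsOfFinAddOrder P)
    (x y : ℤ → K)
    (hxy : ∀ n : ℤ, n ≠ 0 → ∃ h : W.Nonsingular (x n) (y n),
      n • P = WeierstrassCurve.Affine.Point.some _ _ h)
    (n : ℤ) (hn : 1 ≤ n) (k : ℤ) (hk : 1 ≤ k)
    (hneg : ordAt q (x n) < 0) :
    ordAt q (x (n * k)) ≤ ordAt q (x n) := by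
  have hE : ∀ m : ℤ, m ≠ 0 →
      (y m) ^ 2 = (x m) ^ 3 + algebraMap (𝓞 K) K a * (x m) + algebraMap (𝓞 K) K b := by
    intro m hm
    obtain ⟨hns, -⟩ := hxy m hm
    have h := (WeierstrassCurve.Affine.equation_iff (W := W) (x m) (y m)).mp hns.1
    rw [hW] at h
    simp only at h
    linear_combination h
  have hn0 : n ≠ 0 := by omega
  obtain ⟨hx0, hy0, hp⟩ := pole_structure q (og_int q a) (og_int q b) (hE n hn0) hneg
  obtain ⟨s, hsdef⟩ : ∃ s : ℤ, s = ordAt q (x n) - ordAt q (y n) := ⟨_, rfl⟩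
  have hxs : ordAt q (x n) = -(2 * s) := by omega
  have hs : 1 ≤ s := by omega
  have key : ∀ j : ℕ, ordAt q (x (n * (1 + (j : ℤ)))) ≤ -(2 * s) := by
    intro j
    induction j with
    | zero => norm_num; omega
    | succ j ih =>
      obtain ⟨m₁, hm₁def⟩ : ∃ m : ℤ, m = n * (1 + (j : ℤ)) := ⟨_, rfl⟩
      obtain ⟨m₃, hm₃def⟩ : ∃ m : ℤ, m = n * (1 + ((j : ℤ) + 1)) := ⟨_, rfl⟩
      rw [← hm₁def] at ih
      have hm₁pos : 1 ≤ m₁ := by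
        rw [hm₁def]
        have : (0 : ℤ) ≤ j := Int.ofNat_nonneg j
        nlinarith
      have hm₃pos : 1 ≤ m₃ := by
        rw [hm₃def]
        have : (0 : ℤ) ≤ j := Int.ofNat_nonneg j
        nlinarith
      have hgoal : (((j : ℕ) + 1 : ℕ) : ℤ) = (j : ℤ) + 1 := by push_cast; ring
      rw [show (1 + ((j + 1 : ℕ) : ℤ)) = 1 + ((j : ℤ) + 1) by push_cast; ring, ← hm₃def]
      obtain ⟨h₁, e₁⟩ := hxy m₁ (by omega)
      obtain ⟨h₂, e₂⟩ := hxy n hn0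
      obtain ⟨h₃, e₃⟩ := hxy m₃ (by omega)
      have hadd : m₁ • P + n • P = m₃ • P := by
        rw [← add_zsmul]
        congr 1
        rw [hm₁def, hm₃def]; ring
      rw [e₁, e₂, e₃] at hadd
      have hxcond : x m₁ = x n → y m₁ ≠ W.negY (x n) (y n) := by
        intro hxe hye
        rw [WeierstrassCurve.Affine.Point.add_of_Y_eq hxe hye] at hadd
        exact WeierstrassCurve.Affine.Point.some_ne_zero h₃ hadd.symm
      rw [WeierstrassCurve.Affine.Point.add_some (fun hh => hxcond hh.1 hh.2)] at hadd
      have hco : W.addX (x m₁) (x n) (W.slope (x m₁) (x n) (y m₁) (y n)) = x m₃ ∧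
          W.addY (x m₁) (x n) (y m₁) (W.slope (x m₁) (x n) (y m₁) (y n)) = y m₃ := by
        have h' := hadd
        rw [WeierstrassCurve.Affine.Point.some.injEq] at h'
        exact ⟨h'.1, h'.2⟩
      obtain ⟨hx3, hy3⟩ := hco
      obtain ⟨L, hLdef⟩ : ∃ L, L = W.slope (x m₁) (x n) (y m₁) (y n) := ⟨_, rfl⟩
      rw [← hLdef] at hx3 hy3
      obtain ⟨hxm₁0, hym₁0, hpm₁⟩ :=
        pole_structure q (og_int q a) (og_int q b) (hE m₁ (by omega)) (by omega)
      -- the third collinear point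
      have ha₁ : W.a₁ = 0 := by rw [hW]
      have ha₂ : W.a₂ = 0 := by rw [hW]
      have ha₃ : W.a₃ = 0 := by rw [hW]
      have hym₃0 : y m₃ ≠ 0 := by
        intro h0
        have hyeq : y m₃ = W.negY (x m₃) (y m₃) := by
          simp only [WeierstrassCurve.Affine.negY, ha₁, ha₃, h0]; ring
        have h2t := WeierstrassCurve.Affine.Point.add_of_Y_eq (h₁ := h₃) (h₂ := h₃)
          (rfl : x m₃ = x m₃) hyeq
        have hzero : (m₃ + m₃) • P = 0 := by rw [add_zsmul, e₃, h2t]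
        exact hP (isOfFinAddOrder_iff_zsmul_eq_zero.mpr ⟨m₃ + m₃, by omega, hzero⟩)
      -- line facts
      have hxeq3 : x m₃ = L ^ 2 - x m₁ - x n := by
        rw [← hx3]; simp only [WeierstrassCurve.Affine.addX, ha₁, ha₂]; ring
      have hyeq3 : -(y m₃) = L * (x m₃) + (y m₁ - L * (x m₁)) := by
        rw [hxeq3, ← hy3]
        simp only [WeierstrassCurve.Affine.addY, WeierstrassCurve.Affine.negY,
          WeierstrassCurve.Affine.negAddY, WeierstrassCurve.Affine.addX, ha₁, ha₂, ha₃]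
        ring
      have hl₁ : y m₁ = L * (x m₁) + (y m₁ - L * (x m₁)) := by ring
      have hl₂ : y n = L * (x n) + (y m₁ - L * (x m₁)) := by
        by_cases hxx : x m₁ = x n
        · have hyy : y m₁ = y n := by
            rcases WeierstrassCurve.Affine.Y_eq_of_X_eq h₁.1 h₂.1 hxx with h | h
            · exact h
            · exact absurd h (hxcond hxx)
          rw [← hxx, ← hyy]; ring
        · have hLs : L = (y m₁ - y n) / (x m₁ - x n) := by
            rw [hLdef]; exact WeierstrassCurve.Affine.slope_of_X_ne hxx
          have hsubne : x m₁ - x n ≠ 0 := sub_ne_zero.mpr hxx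
          have : L * (x m₁ - x n) = y m₁ - y n := by
            rw [hLs]; field_simp
          linear_combination this
      have htan : x m₁ = x n → 2 * y m₁ * L = 3 * (x m₁) ^ 2 + algebraMap (𝓞 K) K a := by
        intro hxx
        have hyne := hxcond hxx
        have hLs : L = (3 * (x m₁) ^ 2 + 2 * W.a₂ * (x m₁) + W.a₄ - W.a₁ * (y m₁)) /
            ((y m₁) - W.negY (x m₁) (y m₁)) := by
          rw [hLdef]
          have := WeierstrassCurve.Affine.slope_of_Y_ne hxx hyne
          rw [this]
        rw [hW] at hLs
        simp only [WeierstrassCurve.Affine.negY] at hLs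
        norm_num at hLs
        have h2y : (y m₁) + (y m₁) ≠ 0 := by
          intro h0
          apply hym₁0
          have : (2 : K) * y m₁ = 0 := by linear_combination h0
          rcases mul_eq_zero.mp this with h | h
          · exact absurd h two_ne_zero
          · exact h
        rw [hLs]
        field_simp
        ring
      -- apply the closure lemma
      have hE₃' : (-(y m₃)) ^ 2 = (x m₃) ^ 3 + algebraMap (𝓞 K) K a * (x m₃) +
          algebraMap (𝓞 K) K b := by
        rw [neg_sq]; exact hE m₃ (by omega)
      have := closure_lemma q (og_int q a) (og_int q b) hs
        (hE m₁ (by omega)) (hE n hn0) hE₃' hl₁ hl₂ htan hyeq3 (neg_ne_zero.mpr hym₃0)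
        ih (by omega)
      exact this
  have hfin := key (k - 1).toNat
  rw [show n * (1 + (((k - 1).toNat : ℕ) : ℤ)) = n * k by
    have : (((k - 1).toNat : ℕ) : ℤ) = k - 1 := by omega
    rw [this]; ring] at hfin
  omega

end Aux

open scoped Classical in
theorem stmt_10
    (K : Type) [Field K] [NumberField K]
    (a b : 𝓞 K)
    (W : WeierstrassCurve.Affine K)
    (hW : W = { a₁ := 0, a₂ := 0, a₃ := 0, a₄ := algebraMap (𝓞 K) K a,
                a₆ := algebraMap (𝓞 K) K b })
    (P : W.Point) (hP : ¬ IsOfFinAddOrder P)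
    (x y : ℤ → K)
    (hxy : ∀ n : ℤ, n ≠ 0 → ∃ h : W.Nonsingular (x n) (y n),
      n • P = WeierstrassCurve.Affine.Point.some _ _ h)
    (Sbad : Set (HeightOneSpectrum (𝓞 K)))
    (hSbadFin : Sbad.Finite)
    (hSbadRam : ∀ q : HeightOneSpectrum (𝓞 K),
      (∃ p : ℕ, p.Prime ∧ q.asIdeal ^ 2 ∣ Ideal.span {(p : 𝓞 K)}) → q ∈ Sbad)
    (hSbad2 : ∀ q : HeightOneSpectrum (𝓞 K), (2 : 𝓞 K) ∈ q.asIdeal → q ∈ Sbad)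
    (hSbadSing : ∀ q : HeightOneSpectrum (𝓞 K),
      (-16 * (4 * a ^ 3 + 27 * b ^ 2) : 𝓞 K) ∈ q.asIdeal → q ∈ Sbad)
    (hSbadP : ∀ q : HeightOneSpectrum (𝓞 K),
      (ordAt q (x 1) < 0 ∨ ordAt q (y 1) < 0) → q ∈ Sbad)
    (S : ℤ → Set (HeightOneSpectrum (𝓞 K)))
    (hS : ∀ n : ℤ, n ≠ 0 →
      S n = {q : HeightOneSpectrum (𝓞 K) | q ∉ Sbad ∧ ordAt q (x n) < 0})
    (V : Set (HeightOneSpectrum (𝓞 K)))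
    (hV : V = {q : HeightOneSpectrum (𝓞 K) | q ∉ Sbad ∧ ∃ ℓ : ℕ, ℓ.Prime ∧
      ∃ j : ℕ, 1 ≤ j ∧ {n : ℤ | n = 0 ∨ q ∈ S n} = {n : ℤ | (ℓ : ℤ) ^ j ∣ n}})
    (c : ℤ → Ideal (𝓞 K))
    (Tc : ℤ → Finset (HeightOneSpectrum (𝓞 K)))
    (hTc : ∀ n : ℤ, 1 ≤ n → (Tc n : Set (HeightOneSpectrum (𝓞 K))) = V ∩ S n)
    (hc : ∀ n : ℤ, 1 ≤ n →
      c n = ∏ q ∈ Tc n, q.asIdeal ^ (-(ordAt q (x n))).toNat)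
    :
    ∀ m k : ℤ, 1 ≤ m → 1 ≤ k → Int.gcd m k = 1 →
      c m * c k ∣ c (m * k) := by
  
  classical
  intro m k hm hk hg
  have hmk : 1 ≤ m * k := one_le_mul_of_one_le_of_one_le hm hk
  have memTc : ∀ n : ℤ, 1 ≤ n → ∀ q, q ∈ Tc n ↔ (q ∈ V ∧ q ∈ S n) := by
    intro n hn qq
    rw [← Finset.mem_coe, hTc n hn, Set.mem_inter_iff]
  have memS : ∀ n : ℤ, 1 ≤ n → ∀ q, q ∈ S n ↔ (q ∉ Sbad ∧ ordAt q (x n) < 0) := by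
    intro n hn qq
    rw [hS n (by omega)]
    rfl
  -- divisor pattern for q ∈ V
  have hpat : ∀ q ∈ V, ∀ n₁ n₂ : ℤ, n₂ ≠ 0 → q ∈ S n₁ → n₁ ∣ n₂ → q ∈ S n₂ := by
    intro qq hqV n₁ n₂ hn₂ hqS hdvd
    rw [hV] at hqV
    obtain ⟨-, ℓ, hℓ, j, hj, hset⟩ := hqV
    have h1 : n₁ ∈ {n : ℤ | n = 0 ∨ qq ∈ S n} := Or.inr hqS
    rw [hset] at h1
    have h2 : n₂ ∈ {n : ℤ | (ℓ : ℤ) ^ j ∣ n} := dvd_trans h1 hdvd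
    rw [← hset] at h2
    rcases h2 with h2 | h2
    · exact absurd h2 hn₂
    · exact h2
  -- q ∈ V cannot be in both S m and S k
  have hnotboth : ∀ q ∈ V, q ∈ S m → q ∈ S k → False := by
    intro qq hqV hqm hqk
    rw [hV] at hqV
    obtain ⟨-, ℓ, hℓ, j, hj, hset⟩ := hqV
    have h1 : m ∈ {n : ℤ | n = 0 ∨ qq ∈ S n} := Or.inr hqm
    have h2 : k ∈ {n : ℤ | n = 0 ∨ qq ∈ S n} := Or.inr hqk
    rw [hset] at h1 h2
    have hdg : (ℓ : ℤ) ^ j ∣ (Int.gcd m k : ℤ) := Int.dvd_coe_gcd h1 h2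
    rw [hg] at hdg
    have hle : (ℓ : ℤ) ^ j ≤ 1 := Int.le_of_dvd one_pos hdg
    have h2l : (2 : ℤ) ≤ (ℓ : ℤ) := by exact_mod_cast hℓ.two_le
    have : (ℓ : ℤ) ≤ (ℓ : ℤ) ^ j := le_self_pow₀ (by omega) (by omega)
    omega
  have hdisj : Disjoint (Tc m) (Tc k) := by
    rw [Finset.disjoint_left]
    intro qq hqm hqk
    obtain ⟨hqV, hqSm⟩ := (memTc m hm qq).mp hqm
    obtain ⟨-, hqSk⟩ := (memTc k hk qq).mp hqk
    exact hnotboth qq hqV hqSm hqSk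
  have hsubm : Tc m ⊆ Tc (m * k) := by
    intro qq hq
    obtain ⟨hqV, hqSm⟩ := (memTc m hm qq).mp hq
    exact (memTc (m * k) hmk qq).mpr
      ⟨hqV, hpat qq hqV m (m * k) (by omega) hqSm (dvd_mul_right m k)⟩
  have hsubk : Tc k ⊆ Tc (m * k) := by
    intro qq hq
    obtain ⟨hqV, hqSk⟩ := (memTc k hk qq).mp hq
    exact (memTc (m * k) hmk qq).mpr
      ⟨hqV, hpat qq hqV k (m * k) (by omega) hqSk (dvd_mul_left k m)⟩
  -- valuation growth
  have hgrowm : ∀ qq ∈ Tc m, ordAt qq (x (m * k)) ≤ ordAt qq (x m) := by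
    intro qq hq
    obtain ⟨hqV, hqSm⟩ := (memTc m hm qq).mp hq
    exact growth qq a b W hW P hP x y hxy m hm k hk ((memS m hm qq).mp hqSm).2
  have hgrowk : ∀ qq ∈ Tc k, ordAt qq (x (m * k)) ≤ ordAt qq (x k) := by
    intro qq hq
    obtain ⟨hqV, hqSk⟩ := (memTc k hk qq).mp hq
    have := growth qq a b W hW P hP x y hxy k hk m hm ((memS k hk qq).mp hqSk).2
    rwa [mul_comm k m] at this
  -- ideal computation
  rw [hc m hm, hc k hk, hc (m * k) hmk]
  have hdm : (∏ qq ∈ Tc m, qq.asIdeal ^ (-(ordAt qq (x m))).toNat) ∣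
      ∏ qq ∈ Tc m, qq.asIdeal ^ (-(ordAt qq (x (m * k)))).toNat := by
    refine Finset.prod_dvd_prod_of_dvd _ _ ?_
    intro qq hq
    exact pow_dvd_pow _ (by have := hgrowm qq hq; omega)
  have hdk : (∏ qq ∈ Tc k, qq.asIdeal ^ (-(ordAt qq (x k))).toNat) ∣
      ∏ qq ∈ Tc k, qq.asIdeal ^ (-(ordAt qq (x (m * k)))).toNat := by
    refine Finset.prod_dvd_prod_of_dvd _ _ ?_
    intro qq hq
    exact pow_dvd_pow _ (by have := hgrowk qq hq; omega)
  refine dvd_trans (mul_dvd_mul hdm hdk) ?_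
  rw [← Finset.prod_union hdisj]
  exact Finset.prod_dvd_prod_of_subset _ _ _ (Finset.union_subset hsubm hsubk)
end

section
/- Let k₁, k₃, k₄ be integers with |k₁| > 5, k₃ ≠ 0, k₄ = k₃ − k₁, (k₁ − 1) divides (k₄ − 1), and |k₃| = |k₁·(k₁ + 1)|. Then k₄ = k₁². -/
theorem stmt_19 (k₁ k₃ k₄ : ℤ) (h1 : 5 < |k₁|) (h3 : k₃ ≠ 0)
    (h4 : k₄ = k₃ - k₁) (hdvd : (k₁ - 1) ∣ (k₄ - 1))
    (habs : |k₃| = |k₁ * (k₁ + 1)|) : k₄ = k₁ ^ 2 := by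
  rcases abs_eq_abs.mp habs with h | h
  · subst h4 h; ring
  · exfalso
    subst h4 h
    have hd4 : (k₁ - 1) ∣ 4 := by
      have h2 : (k₁ - 1) ∣ (-(k₁ * (k₁ + 1)) - k₁ - 1 + (k₁ - 1) * (k₁ + 3)) := by
        exact dvd_add hdvd (Dvd.intro _ rfl)
      have : (-(k₁ * (k₁ + 1)) - k₁ - 1 + (k₁ - 1) * (k₁ + 3)) = -4 := by ring
      rw [this] at h2
      exact (dvd_neg).mp h2
    have := Int.le_of_dvd (by norm_num) hd4
    have h5 := Int.le_of_dvd (by norm_num) ((neg_dvd).mpr hd4)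
    rcases abs_cases k₁ with ⟨he, _⟩ | ⟨he, _⟩ <;> omega
end
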